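/- arXiv:1901.01476 — 5 statements merged into one kernel-verified Lean document; each statement's English description precedes it below -/
import Mathlib

section
/- Let c and d be real constants and suppose that for every n, every Θ6-graph on n points in general position has a matching of size at least cn+d (i.e., μ(n) ≥ cn+d), with c < 1. Then for every n, β(n) ≥ (cn+d)/(1−c), where β(n) is the minimum over all sets P of n points in general position of the minimum size of a blocking set of G⋆(P). -/
noncomputable section

/-- Points in the plane. -/
abbrev Pt : Type := ℝ × ℝ

/-- `P` is in general position: no line through two points of `P` makes an angle of
0°, 60°, or 120° with the horizontal. -/
def GenPos (P : Finset Pt) : Prop :=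
  ∀ p ∈ P, ∀ q ∈ P, p ≠ q →
    p.2 ≠ q.2 ∧
    q.2 - p.2 ≠ Real.sqrt 3 * (q.1 - p.1) ∧
    q.2 - p.2 ≠ -Real.sqrt 3 * (q.1 - p.1)

/-- First cone coordinate (height). -/
def cA (z : Pt) : ℝ := z.2
/-- Second cone coordinate. -/
def cB (z : Pt) : ℝ := Real.sqrt 3 * z.1 + z.2
/-- Third cone coordinate. -/
def cC (z : Pt) : ℝ := -Real.sqrt 3 * z.1 + z.2

/-- The smallest upward equilateral triangle (horizontal bottom side) having both
`p` and `q` on its boundary, as a closed set. -/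
def upTri (p q : Pt) : Set Pt :=
  {x | min (cA p) (cA q) ≤ cA x ∧ cB x ≤ max (cB p) (cB q) ∧ cC x ≤ max (cC p) (cC q)}

/-- The interior of `upTri p q`. -/
def upTriInt (p q : Pt) : Set Pt :=
  {x | min (cA p) (cA q) < cA x ∧ cB x < max (cB p) (cB q) ∧ cC x < max (cC p) (cC q)}

/-- The smallest downward equilateral triangle (horizontal top side) having both
`p` and `q` on its boundary, as a closed set. -/
def downTri (p q : Pt) : Set Pt :=
  {x | cA x ≤ max (cA p) (cA q) ∧ min (cB p) (cB q) ≤ cB x ∧ min (cC p) (cC q) ≤ cC x}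

/-- The interior of `downTri p q`. -/
def downTriInt (p q : Pt) : Set Pt :=
  {x | cA x < max (cA p) (cA q) ∧ min (cB p) (cB q) < cB x ∧ min (cC p) (cC q) < cC x}

lemma upTriInt_comm (p q : Pt) : upTriInt p q = upTriInt q p := by
  ext x
  simp only [upTriInt, Set.mem_setOf_eq]
  rw [min_comm (cA p) (cA q), max_comm (cB p) (cB q), max_comm (cC p) (cC q)]

lemma downTriInt_comm (p q : Pt) : downTriInt p q = downTriInt q p := by
  ext x
  simp only [downTriInt, Set.mem_setOf_eq]
  rw [max_comm (cA p) (cA q), min_comm (cB p) (cB q), min_comm (cC p) (cC q)]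

/-- `upTri p q` is empty with respect to `P`: its interior contains no point of `P`. -/
def EmptyUp (P : Finset Pt) (p q : Pt) : Prop := ∀ r ∈ P, r ∉ upTriInt p q

/-- `downTri p q` is empty with respect to `P`: its interior contains no point of `P`. -/
def EmptyDown (P : Finset Pt) (p q : Pt) : Prop := ∀ r ∈ P, r ∉ downTriInt p q

/-- The Θ₆-graph `G⋆(P)`: vertices are the points of `P`, and `p` is adjacent to `q`
iff `△(p,q)` or `▽(p,q)` is empty with respect to `P`. -/
def theta6 (P : Finset Pt) : SimpleGraph {x // x ∈ P} where
  Adj p q := p ≠ q ∧ (EmptyUp P p.1 q.1 ∨ EmptyDown P p.1 q.1)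
  symm := by
    constructor
    rintro p q ⟨hne, h⟩
    refine ⟨hne.symm, ?_⟩
    unfold EmptyUp EmptyDown at h ⊢
    rcases h with h | h
    · exact Or.inl (by rw [upTriInt_comm]; exact h)
    · exact Or.inr (by rw [downTriInt_comm]; exact h)
  loopless := ⟨fun p h => h.1 rfl⟩

/-- `B` blocks `G⋆(P)`: every empty triangle introducing an edge of `G⋆(P)` contains a
point of `B` in its interior. -/
def Blocks (P B : Finset Pt) : Prop :=
  ∀ p ∈ P, ∀ q ∈ P, p ≠ q →
    (EmptyUp P p q → ∃ b ∈ B, b ∈ upTriInt p q) ∧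
    (EmptyDown P p q → ∃ b ∈ B, b ∈ downTriInt p q)

/-- `betaMin n`: the minimum, over sets `P` of `n` points in general position, of the
minimum size of a blocking set of `G⋆(P)`. -/
def betaMin (n : ℕ) : ℕ :=
  sInf {k | ∃ P B : Finset Pt, P.card = n ∧ GenPos P ∧ Blocks P B ∧ B.card = k}

/-- An (up or down) triangle described by two points and an orientation flag:
its interior. -/
def triIntr (t : Pt × Pt × Bool) : Set Pt :=
  if t.2.2 then upTriInt t.1 t.2.1 else downTriInt t.1 t.2.1

/-- An (up or down) triangle described by two points and an orientation flag:
the closed triangle. -/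
def triCl (t : Pt × Pt × Bool) : Set Pt :=
  if t.2.2 then upTri t.1 t.2.1 else downTri t.1 t.2.1

/-- `t` describes an empty triangle of `P` (one that introduces an edge of `G⋆(P)`). -/
def IsEmptyTriOf (P : Finset Pt) (t : Pt × Pt × Bool) : Prop :=
  t.1 ∈ P ∧ t.2.1 ∈ P ∧ t.1 ≠ t.2.1 ∧ ∀ r ∈ P, r ∉ triIntr t


/-! ### Auxiliary lemmas -/

lemma sqrt3_pos : (0:ℝ) < Real.sqrt 3 := Real.sqrt_pos.2 (by norm_num)

lemma sqrt3_sq : Real.sqrt 3 ^ 2 = 3 := Real.sq_sqrt (by norm_num)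

lemma sqrt3_ne_two : Real.sqrt 3 ≠ 2 := by
  intro h
  have h2 := sqrt3_sq
  rw [h] at h2
  norm_num at h2

lemma cont_cA : Continuous cA := continuous_snd
lemma cont_cB : Continuous cB := (continuous_const.mul continuous_fst).add continuous_snd
lemma cont_cC : Continuous cC := (continuous_const.mul continuous_fst).add continuous_snd

lemma isOpen_upTriInt (p q : Pt) : IsOpen (upTriInt p q) := by
  have h1 : IsOpen {x : Pt | min (cA p) (cA q) < cA x} := isOpen_lt continuous_const cont_cA
  have h2 : IsOpen {x : Pt | cB x < max (cB p) (cB q)} := isOpen_lt cont_cB continuous_const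
  have h3 : IsOpen {x : Pt | cC x < max (cC p) (cC q)} := isOpen_lt cont_cC continuous_const
  have he : upTriInt p q = {x : Pt | min (cA p) (cA q) < cA x} ∩
      ({x : Pt | cB x < max (cB p) (cB q)} ∩ {x : Pt | cC x < max (cC p) (cC q)}) := by
    ext x
    simp [upTriInt, Set.mem_setOf_eq, and_assoc]
  rw [he]
  exact h1.inter (h2.inter h3)

lemma isOpen_downTriInt (p q : Pt) : IsOpen (downTriInt p q) := by
  have h1 : IsOpen {x : Pt | cA x < max (cA p) (cA q)} := isOpen_lt cont_cA continuous_const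
  have h2 : IsOpen {x : Pt | min (cB p) (cB q) < cB x} := isOpen_lt continuous_const cont_cB
  have h3 : IsOpen {x : Pt | min (cC p) (cC q) < cC x} := isOpen_lt continuous_const cont_cC
  have he : downTriInt p q = {x : Pt | cA x < max (cA p) (cA q)} ∩
      ({x : Pt | min (cB p) (cB q) < cB x} ∩ {x : Pt | min (cC p) (cC q) < cC x}) := by
    ext x
    simp [downTriInt, Set.mem_setOf_eq, and_assoc]
  rw [he]
  exact h1.inter (h2.inter h3)

lemma cB_add_cC (p : Pt) : cB p + cC p = 2 * cA p := by
  simp only [cA, cB, cC]; ring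

lemma eq_of_cB_cC {p q : Pt} (h1 : cB p = cB q) (h2 : cC p = cC q) : p = q := by
  simp only [cB, cC] at h1 h2
  have hs := sqrt3_pos
  have hx : Real.sqrt 3 * (p.1 - q.1) = 0 := by linarith
  rcases mul_eq_zero.1 hx with h | h
  · exact absurd h (ne_of_gt hs)
  · have hx1 : p.1 = q.1 := by linarith
    have hx2 : p.2 = q.2 := by
      rw [hx1] at h1; linarith
    exact Prod.ext_iff.2 ⟨hx1, hx2⟩

lemma two_min_lt {p q : Pt} (h : p ≠ q) :
    2 * min (cA p) (cA q) < max (cB p) (cB q) + max (cC p) (cC q) := by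
  by_contra hle
  push_neg at hle
  have hp := cB_add_cC p
  have hq := cB_add_cC q
  have e1 := le_max_left (cB p) (cB q)
  have e2 := le_max_right (cB p) (cB q)
  have e3 := le_max_left (cC p) (cC q)
  have e4 := le_max_right (cC p) (cC q)
  have m1 := min_le_left (cA p) (cA q)
  have m2 := min_le_right (cA p) (cA q)
  have hb : cB p = cB q := by linarith
  have hcc : cC p = cC q := by linarith
  exact h (eq_of_cB_cC hb hcc)

lemma two_max_gt {p q : Pt} (h : p ≠ q) :
    min (cB p) (cB q) + min (cC p) (cC q) < 2 * max (cA p) (cA q) := by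
  by_contra hle
  push_neg at hle
  have hp := cB_add_cC p
  have hq := cB_add_cC q
  have e1 := min_le_left (cB p) (cB q)
  have e2 := min_le_right (cB p) (cB q)
  have e3 := min_le_left (cC p) (cC q)
  have e4 := min_le_right (cC p) (cC q)
  have m1 := le_max_left (cA p) (cA q)
  have m2 := le_max_right (cA p) (cA q)
  have hb : cB p = cB q := by linarith
  have hcc : cC p = cC q := by linarith
  exact h (eq_of_cB_cC hb hcc)

lemma mem_coords (β γ : ℝ) :
    cB (((β - γ)/(2*Real.sqrt 3), (β + γ)/2) : Pt) = β ∧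
      cC (((β - γ)/(2*Real.sqrt 3), (β + γ)/2) : Pt) = γ := by
  have hs : Real.sqrt 3 ≠ 0 := ne_of_gt sqrt3_pos
  have hsq := sqrt3_sq
  constructor
  · show Real.sqrt 3 * ((β - γ)/(2*Real.sqrt 3)) + (β + γ)/2 = β
    field_simp
    nlinarith [hsq]
  · show -Real.sqrt 3 * ((β - γ)/(2*Real.sqrt 3)) + (β + γ)/2 = γ
    field_simp
    nlinarith [hsq]

lemma upTriInt_nonempty {p q : Pt} (h : p ≠ q) : (upTriInt p q).Nonempty := by
  have key := two_min_lt h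
  set α := min (cA p) (cA q) with hα
  set β := max (cB p) (cB q) with hβ
  set γ := max (cC p) (cC q) with hγ
  set ε := (β + γ - 2*α)/4 with hε
  have hεpos : 0 < ε := by rw [hε]; linarith
  obtain ⟨hB, hC⟩ := mem_coords (β - ε) (γ - ε)
  refine ⟨(((β - ε) - (γ - ε))/(2*Real.sqrt 3), ((β - ε) + (γ - ε))/2), ?_, ?_, ?_⟩
  · show α < cA _
    show α < (((β - ε) + (γ - ε))/2 : ℝ)
    rw [hε]; linarith
  · rw [hB]; linarith
  · rw [hC]; linarith

lemma downTriInt_nonempty {p q : Pt} (h : p ≠ q) : (downTriInt p q).Nonempty := by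
  have key := two_max_gt h
  set α := max (cA p) (cA q) with hα
  set β := min (cB p) (cB q) with hβ
  set γ := min (cC p) (cC q) with hγ
  set ε := (2*α - β - γ)/4 with hε
  have hεpos : 0 < ε := by rw [hε]; linarith
  obtain ⟨hB, hC⟩ := mem_coords (β + ε) (γ + ε)
  refine ⟨(((β + ε) - (γ + ε))/(2*Real.sqrt 3), ((β + ε) + (γ + ε))/2), ?_, ?_, ?_⟩
  · show cA _ < α
    show (((β + ε) + (γ + ε))/2 : ℝ) < α
    rw [hε]; linarith
  · rw [hB]; linarith
  · rw [hC]; linarith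

lemma exists_blocker (P : Finset Pt) : ∃ B : Finset Pt, Blocks P B := by
  classical
  set f : Pt × Pt → Pt := fun pq =>
    if h : (upTriInt pq.1 pq.2).Nonempty then h.choose else (0, 0) with hf
  set g : Pt × Pt → Pt := fun pq =>
    if h : (downTriInt pq.1 pq.2).Nonempty then h.choose else (0, 0) with hg
  refine ⟨(P ×ˢ P).image f ∪ (P ×ˢ P).image g, ?_⟩
  intro p hp q hq hpq
  constructor
  · intro _
    have hne : (upTriInt p q).Nonempty := upTriInt_nonempty hpq
    refine ⟨f (p, q), Finset.mem_union_left _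
      (Finset.mem_image_of_mem f (Finset.mem_product.2 ⟨hp, hq⟩)), ?_⟩
    have : f (p, q) = hne.choose := by rw [hf]; simp only []; rw [dif_pos hne]
    rw [this]
    exact hne.choose_spec
  · intro _
    have hne : (downTriInt p q).Nonempty := downTriInt_nonempty hpq
    refine ⟨g (p, q), Finset.mem_union_right _
      (Finset.mem_image_of_mem g (Finset.mem_product.2 ⟨hp, hq⟩)), ?_⟩
    have : g (p, q) = hne.choose := by rw [hg]; simp only []; rw [dif_pos hne]
    rw [this]
    exact hne.choose_spec

/-- One can perturb a point inside any open neighbourhood so as to be in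
"general position" with respect to a given finite set. -/
lemma exists_perturb (S : Finset Pt) (U : Set Pt) (hU : IsOpen U) (b : Pt) (hb : b ∈ U) :
    ∃ x ∈ U, ∀ p ∈ S, x.2 ≠ p.2 ∧ x.2 - p.2 ≠ Real.sqrt 3 * (x.1 - p.1) ∧
      x.2 - p.2 ≠ -Real.sqrt 3 * (x.1 - p.1) := by
  classical
  obtain ⟨ε, hε, hball⟩ := Metric.isOpen_iff.1 hU b hb
  set s := Real.sqrt 3 with hsdef
  have hs2 : (2:ℝ) - s ≠ 0 := by
    intro h0
    have h1 : s = 2 := by linarith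
    rw [hsdef] at h1
    exact sqrt3_ne_two h1
  have hspos : (0:ℝ) < s := sqrt3_pos
  have hs2' : (2:ℝ) + s ≠ 0 := by positivity
  set T : Finset ℝ := S.biUnion (fun p => {(p.2 - b.2)/2,
      (s*(b.1 - p.1) - (b.2 - p.2))/(2 - s),
      (-s*(b.1 - p.1) - (b.2 - p.2))/(2 + s)}) with hT
  have hI : (Set.Ioo (0:ℝ) (ε/2) \ (T : Set ℝ)).Nonempty := by
    apply Set.Infinite.nonempty
    exact Set.Infinite.diff (Set.Ioo_infinite (by linarith)) T.finite_toSet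
  obtain ⟨t, ⟨ht0, htε⟩, htT⟩ := hI
  have hTp : ∀ p ∈ S, t ≠ (p.2 - b.2)/2 ∧ t ≠ (s*(b.1 - p.1) - (b.2 - p.2))/(2 - s) ∧
      t ≠ (-s*(b.1 - p.1) - (b.2 - p.2))/(2 + s) := by
    intro p hp
    have hm : t ∉ ({(p.2 - b.2)/2, (s*(b.1 - p.1) - (b.2 - p.2))/(2 - s),
        (-s*(b.1 - p.1) - (b.2 - p.2))/(2 + s)} : Finset ℝ) := by
      intro hmem
      exact htT (Finset.mem_coe.2 (Finset.mem_biUnion.2 ⟨p, hp, hmem⟩))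
    simpa [Finset.mem_insert, Finset.mem_singleton, not_or] using hm
  refine ⟨(b.1 + t, b.2 + 2*t), ?_, ?_⟩
  · apply hball
    rw [Metric.mem_ball, Prod.dist_eq]
    simp only [Real.dist_eq]
    have e1 : b.1 + t - b.1 = t := by ring
    have e2 : b.2 + 2*t - b.2 = 2*t := by ring
    rw [e1, e2, abs_of_pos ht0, abs_of_pos (by linarith : (0:ℝ) < 2*t)]
    exact max_lt (by linarith) (by linarith)
  · intro p hp
    obtain ⟨h1, h2, h3⟩ := hTp p hp
    refine ⟨?_, ?_, ?_⟩
    · intro h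
      exact h1 (by simp only [] at h; linarith)
    · intro h
      apply h2
      rw [eq_div_iff hs2]
      simp only [] at h
      linear_combination h
    · intro h
      apply h3
      rw [eq_div_iff hs2']
      simp only [] at h
      linear_combination h

/-- The set of points blocking every (open) triangle of pairs of `P` that `b` blocks. -/
def keepSet (P : Finset Pt) (b : Pt) : Set Pt :=
  {x | ∀ p ∈ P, ∀ q ∈ P, (b ∈ upTriInt p q → x ∈ upTriInt p q) ∧
    (b ∈ downTriInt p q → x ∈ downTriInt p q)}

lemma self_mem_keepSet (P : Finset Pt) (b : Pt) : b ∈ keepSet P b :=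
  fun _ _ _ _ => ⟨id, id⟩

lemma isOpen_keepSet (P : Finset Pt) (b : Pt) : IsOpen (keepSet P b) := by
  classical
  have he : keepSet P b = ⋂ p ∈ P, ⋂ q ∈ P,
      ((if b ∈ upTriInt p q then upTriInt p q else Set.univ) ∩
       (if b ∈ downTriInt p q then downTriInt p q else Set.univ)) := by
    ext x
    simp only [keepSet, Set.mem_setOf_eq, Set.mem_iInter, Set.mem_inter_iff]
    constructor
    · intro h p hp q hq
      obtain ⟨h1, h2⟩ := h p hp q hq
      constructor
      · split_ifs with hbc
        · exact h1 hbc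
        · exact Set.mem_univ x
      · split_ifs with hbc
        · exact h2 hbc
        · exact Set.mem_univ x
    · intro h p hp q hq
      obtain ⟨h1, h2⟩ := h p hp q hq
      constructor
      · intro hbc; rw [if_pos hbc] at h1; exact h1
      · intro hbc; rw [if_pos hbc] at h2; exact h2
  rw [he]
  refine isOpen_biInter_finset fun p _ => isOpen_biInter_finset fun q _ => IsOpen.inter ?_ ?_
  · split_ifs
    · exact isOpen_upTriInt p q
    · exact isOpen_univ
  · split_ifs
    · exact isOpen_downTriInt p q
    · exact isOpen_univ

lemma genPos_insert {Q : Finset Pt} (hQ : GenPos Q) {x : Pt}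
    (hx : ∀ p ∈ Q, x.2 ≠ p.2 ∧ x.2 - p.2 ≠ Real.sqrt 3 * (x.1 - p.1) ∧
      x.2 - p.2 ≠ -Real.sqrt 3 * (x.1 - p.1)) :
    GenPos (insert x Q) := by
  intro p hp q hq hpq
  rcases Finset.mem_insert.1 hp with hpx | hpQ
  · rcases Finset.mem_insert.1 hq with hqx | hqQ
    · exact absurd (hpx.trans hqx.symm) hpq
    · subst hpx
      obtain ⟨h1, h2, h3⟩ := hx q hqQ
      exact ⟨h1, fun h => h2 (by linear_combination -h),
        fun h => h3 (by linear_combination -h)⟩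
  · rcases Finset.mem_insert.1 hq with hqx | hqQ
    · subst hqx
      obtain ⟨h1, h2, h3⟩ := hx p hpQ
      exact ⟨Ne.symm h1, h2, h3⟩
    · exact hQ p hpQ q hqQ hpq

lemma perturb (P : Finset Pt) (B : Finset Pt) :
    ∀ Q : Finset Pt, GenPos Q →
    ∃ B' : Finset Pt, B'.card ≤ B.card ∧ GenPos (Q ∪ B') ∧ (∀ b' ∈ B', b' ∉ Q) ∧
      ∀ b ∈ B, ∃ b' ∈ B', b' ∈ keepSet P b := by
  classical
  induction B using Finset.induction_on with
  | empty =>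
    intro Q hQ
    exact ⟨∅, by simp, by simpa using hQ, by simp, by simp⟩
  | @insert a s ha ih =>
    intro Q hQ
    obtain ⟨B', hcard, hgen, hdisj, hkeep⟩ := ih Q hQ
    obtain ⟨x, hxkeep, hxgood⟩ := exists_perturb (Q ∪ B') (keepSet P a)
      (isOpen_keepSet P a) a (self_mem_keepSet P a)
    refine ⟨insert x B', ?_, ?_, ?_, ?_⟩
    · calc (insert x B').card ≤ B'.card + 1 := Finset.card_insert_le _ _
        _ ≤ s.card + 1 := by omega
        _ = (insert a s).card := (Finset.card_insert_of_notMem ha).symm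
    · rw [Finset.union_insert]
      exact genPos_insert hgen fun p hp => hxgood p hp
    · intro b' hb'
      rcases Finset.mem_insert.1 hb' with rfl | hb'
      · intro hbQ
        exact (hxgood b' (Finset.mem_union_left _ hbQ)).1 rfl
      · exact hdisj b' hb'
    · intro b hb
      rcases Finset.mem_insert.1 hb with rfl | hb
      · exact ⟨x, Finset.mem_insert_self _ _, hxkeep⟩
      · obtain ⟨b', hb1, hb2⟩ := hkeep b hb
        exact ⟨b', Finset.mem_insert_of_mem hb1, hb2⟩

lemma matching_le {V : Type} {G : SimpleGraph V}
    {M : G.Subgraph} (hM : M.IsMatching) (f0 : V → Pt) (B : Finset Pt)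
    (hinj : Function.Injective f0)
    (hcover : ∀ u v, M.Adj u v → f0 u ∈ B ∨ f0 v ∈ B) :
    M.edgeSet.ncard ≤ B.card := by
  classical
  have key : ∀ e ∈ M.edgeSet, ∃ v : V, v ∈ e ∧ f0 v ∈ B := by
    intro e
    induction e using Sym2.ind with
    | _ u v =>
      intro he
      have hadj : M.Adj u v := SimpleGraph.Subgraph.mem_edgeSet.1 he
      rcases hcover u v hadj with h | h
      · exact ⟨u, Sym2.mem_mk_left u v, h⟩
      · exact ⟨v, Sym2.mem_mk_right u v, h⟩
  set f : Sym2 V → Pt := fun e =>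
    if h : ∃ v : V, v ∈ e ∧ f0 v ∈ B then f0 h.choose else (0, 0) with hfdef
  have hfspec : ∀ e (h : ∃ v : V, v ∈ e ∧ f0 v ∈ B),
      f e = f0 h.choose := by
    intro e h
    rw [hfdef]
    simp only []
    rw [dif_pos h]
  have hinjOn : Set.InjOn f M.edgeSet := by
    intro e1 he1 e2 he2 hf12
    have H1 := key e1 he1
    have H2 := key e2 he2
    rw [hfspec e1 H1, hfspec e2 H2] at hf12
    have hv12 : H1.choose = H2.choose := hinj hf12
    obtain ⟨hv1e, _⟩ := H1.choose_spec
    obtain ⟨hv2e, _⟩ := H2.choose_spec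
    rw [hv12] at hv1e
    set v := H2.choose
    obtain ⟨w1, hw1⟩ := Sym2.mem_iff_exists.1 hv1e
    obtain ⟨w2, hw2⟩ := Sym2.mem_iff_exists.1 hv2e
    rw [hw1] at he1
    rw [hw2] at he2
    have ha1 : M.Adj v w1 := SimpleGraph.Subgraph.mem_edgeSet.1 he1
    have ha2 : M.Adj v w2 := SimpleGraph.Subgraph.mem_edgeSet.1 he2
    have hv : v ∈ M.verts := M.edge_vert ha1
    obtain ⟨w, _, huniq⟩ := hM hv
    have : w1 = w2 := by rw [huniq w1 ha1, huniq w2 ha2]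
    rw [hw1, hw2, this]
  have himg : f '' M.edgeSet ⊆ (B : Set Pt) := by
    rintro y ⟨e, he, rfl⟩
    rw [hfspec e (key e he)]
    exact (key e he).choose_spec.2
  calc M.edgeSet.ncard = (f '' M.edgeSet).ncard := (Set.ncard_image_of_injOn hinjOn).symm
    _ ≤ (B : Set Pt).ncard := Set.ncard_le_ncard himg B.finite_toSet
    _ = B.card := Set.ncard_coe_finset B

lemma exists_genpos (n : ℕ) : ∃ P : Finset Pt, P.card = n ∧ GenPos P := by
  classical
  have hirr : Irrational (Real.sqrt 3) := by
    have := Nat.prime_three.irrational_sqrt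
    simpa using this
  have hinj : Function.Injective (fun i : ℕ => ((((i:ℝ)), ((i:ℝ))^2) : Pt)) := by
    intro i j h
    have h1 : ((i:ℝ)) = ((j:ℝ)) := congrArg Prod.fst h
    exact_mod_cast h1
  refine ⟨(Finset.range n).image (fun i : ℕ => ((((i:ℝ)), ((i:ℝ))^2) : Pt)), ?_, ?_⟩
  · rw [Finset.card_image_of_injective _ hinj, Finset.card_range]
  · intro p hp q hq hpq
    simp only [Finset.mem_image] at hp hq
    obtain ⟨i, _, rfl⟩ := hp
    obtain ⟨j, _, rfl⟩ := hq
    have hij : ((i:ℝ)) ≠ ((j:ℝ)) := by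
      intro h
      exact hpq (by rw [h])
    have hji : ((j:ℝ)) - ((i:ℝ)) ≠ 0 := sub_ne_zero.2 (Ne.symm hij)
    have hi0 : (0:ℝ) ≤ (i:ℝ) := Nat.cast_nonneg i
    have hj0 : (0:ℝ) ≤ (j:ℝ) := Nat.cast_nonneg j
    refine ⟨?_, ?_, ?_⟩
    · show ((i:ℝ))^2 ≠ ((j:ℝ))^2
      intro h
      rcases hij.lt_or_gt with hlt | hlt
      · nlinarith
      · nlinarith
    · show ((j:ℝ))^2 - ((i:ℝ))^2 ≠ Real.sqrt 3 * (((j:ℝ)) - ((i:ℝ)))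
      intro h
      have h2 : (((j:ℝ)) + ((i:ℝ))) * (((j:ℝ)) - ((i:ℝ))) =
          Real.sqrt 3 * (((j:ℝ)) - ((i:ℝ))) := by linear_combination h
      have h3 : ((j:ℝ)) + ((i:ℝ)) = Real.sqrt 3 := mul_right_cancel₀ hji h2
      have : Irrational (((j + i : ℕ) : ℝ)) := by
        push_cast
        rw [h3]
        exact hirr
      exact Nat.not_irrational (j + i) this
    · show ((j:ℝ))^2 - ((i:ℝ))^2 ≠ -Real.sqrt 3 * (((j:ℝ)) - ((i:ℝ)))
      intro h
      have h2 : (((j:ℝ)) + ((i:ℝ))) * (((j:ℝ)) - ((i:ℝ))) =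
          (-Real.sqrt 3) * (((j:ℝ)) - ((i:ℝ))) := by linear_combination h
      have h3 : ((j:ℝ)) + ((i:ℝ)) = -Real.sqrt 3 := mul_right_cancel₀ hji h2
      have := sqrt3_pos
      linarith

/-- If every Θ₆-graph on `n` points in general position has a matching of size at least
`c·n + d` (with `c < 1`), then `β(n) ≥ (c·n + d)/(1 − c)` for every `n`. -/
theorem beta_lower_bound_of_matching_bound (c d : ℝ) (hc : c < 1)
    (hmu : ∀ P : Finset Pt, GenPos P →
      ∃ M : (theta6 P).Subgraph, M.IsMatching ∧
        c * (P.card : ℝ) + d ≤ (M.edgeSet.ncard : ℝ)) :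
    ∀ n : ℕ, (c * (n : ℝ) + d) / (1 - c) ≤ (betaMin n : ℝ)  := by
  intro n
  have h1c : (0:ℝ) < 1 - c := by linarith
  set S : Set ℕ := {k | ∃ P B : Finset Pt, P.card = n ∧ GenPos P ∧ Blocks P B ∧ B.card = k}
    with hS
  have key : ∀ k ∈ S, c * (n:ℝ) + d ≤ (1 - c) * (k:ℝ) := by
    rintro k ⟨P, B, hPcard, hPgen, hblock, hBcard⟩
    obtain ⟨B', hcard, hgen, hdisj, hkeep⟩ := perturb P B P hPgen
    obtain ⟨M, hM, hMcard⟩ := hmu (P ∪ B') hgen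
    have hcover : ∀ u v : {x // x ∈ P ∪ B'}, M.Adj u v →
        (Subtype.val u) ∈ B' ∨ (Subtype.val v) ∈ B' := by
      intro u v huv
      by_contra hcon
      push_neg at hcon
      obtain ⟨hu, hv⟩ := hcon
      have huP : (u : Pt) ∈ P := by
        have h2 := u.2
        rw [Finset.mem_union] at h2
        tauto
      have hvP : (v : Pt) ∈ P := by
        have h2 := v.2
        rw [Finset.mem_union] at h2
        tauto
      have hadj : (theta6 (P ∪ B')).Adj u v := M.adj_sub huv
      obtain ⟨hne, hemp⟩ := hadj
      have hne' : (u : Pt) ≠ (v : Pt) := fun h => hne (Subtype.ext h)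
      rcases hemp with h | h
      · have hup : EmptyUp P (u : Pt) (v : Pt) := fun r hr =>
          h r (Finset.mem_union_left _ hr)
        obtain ⟨b, hbB, hbT⟩ := (hblock _ huP _ hvP hne').1 hup
        obtain ⟨b', hb'B', hb'keep⟩ := hkeep b hbB
        exact h b' (Finset.mem_union_right _ hb'B') ((hb'keep _ huP _ hvP).1 hbT)
      · have hdn : EmptyDown P (u : Pt) (v : Pt) := fun r hr =>
          h r (Finset.mem_union_left _ hr)
        obtain ⟨b, hbB, hbT⟩ := (hblock _ huP _ hvP hne').2 hdn
        obtain ⟨b', hb'B', hb'keep⟩ := hkeep b hbB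
        exact h b' (Finset.mem_union_right _ hb'B') ((hb'keep _ huP _ hvP).2 hbT)
    have hcount : M.edgeSet.ncard ≤ B'.card :=
      matching_le hM Subtype.val B' Subtype.val_injective hcover
    have hdisj' : Disjoint P B' := by
      rw [Finset.disjoint_right]
      intro a haB haP
      exact hdisj a haB haP
    have hunion : (P ∪ B').card = n + B'.card := by
      rw [Finset.card_union_of_disjoint hdisj', hPcard]
    have hm : c * ((n:ℝ) + (B'.card : ℝ)) + d ≤ (B'.card : ℝ) := by
      have h1 : ((P ∪ B').card : ℝ) = (n:ℝ) + (B'.card : ℝ) := by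
        rw [hunion]; push_cast; ring
      have h2 : (M.edgeSet.ncard : ℝ) ≤ (B'.card : ℝ) := by exact_mod_cast hcount
      calc c * ((n:ℝ) + (B'.card : ℝ)) + d = c * ((P ∪ B').card : ℝ) + d := by rw [h1]
        _ ≤ (M.edgeSet.ncard : ℝ) := hMcard
        _ ≤ (B'.card : ℝ) := h2
    have hB'k : (B'.card : ℝ) ≤ (k : ℝ) := by
      have : B'.card ≤ k := hBcard ▸ hcard
      exact_mod_cast this
    nlinarith [mul_le_mul_of_nonneg_left hB'k h1c.le]
  have hSne : S.Nonempty := by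
    obtain ⟨P, hPcard, hPgen⟩ := exists_genpos n
    obtain ⟨B, hB⟩ := exists_blocker P
    exact ⟨B.card, P, B, hPcard, hPgen, hB, rfl⟩
  have hmem : sInf S ∈ S := Nat.sInf_mem hSne
  have hkey := key _ hmem
  have hbeta : betaMin n = sInf S := rfl
  rw [hbeta, div_le_iff₀ h1c]
  nlinarith [hkey]
end
end

section
/- For every n ≥ 1, β(n+1) ≤ β(n) + 1, where β(n) is the minimum over all sets P of n points in the plane in general position of the minimum size of a blocking set of the Θ6-graph G⋆(P). -/
noncomputable section

lemma betaSet_nonempty (n : ℕ) :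
    {k | ∃ P B : Finset Pt, P.card = n ∧ GenPos P ∧ Blocks P B ∧ B.card = k}.Nonempty := by
  classical
  set P : Finset Pt := (Finset.range n).image (fun i : ℕ => ((0:ℝ), (i:ℝ))) with hP
  set B : Finset Pt := (P ×ˢ P).image (fun pq => ((0:ℝ), (pq.1.2 + pq.2.2)/2)) with hB
  have hmem : ∀ p ∈ P, p.1 = 0 := by
    intro p hp
    simp only [hP, Finset.mem_image, Finset.mem_range] at hp
    obtain ⟨i, _, rfl⟩ := hp
    rfl
  have hinj : Function.Injective (fun i : ℕ => (((0:ℝ), (i:ℝ)) : Pt)) := by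
    intro a b h
    have h2 : ((a:ℝ)) = (b:ℝ) := congrArg Prod.snd h
    exact_mod_cast h2
  have hcard : P.card = n := by
    rw [hP, Finset.card_image_of_injective _ hinj, Finset.card_range]
  have hgp : GenPos P := by
    intro p hp q hq hne
    have hp1 := hmem p hp
    have hq1 := hmem q hq
    have h2 : p.2 ≠ q.2 := by
      intro h
      exact hne (Prod.ext (hp1.trans hq1.symm) h)
    refine ⟨h2, ?_, ?_⟩ <;> rw [hq1, hp1] <;> simp [sub_eq_zero, h2.symm]
  have hbl : Blocks P B := by
    intro p hp q hq hne
    have hp1 := hmem p hp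
    have hq1 := hmem q hq
    have h2 : p.2 ≠ q.2 := fun h => hne (Prod.ext (hp1.trans hq1.symm) h)
    set m : Pt := ((0:ℝ), (p.2 + q.2)/2) with hm
    have hmB : m ∈ B := by
      rw [hB]
      exact Finset.mem_image.2 ⟨(p, q), Finset.mem_product.2 ⟨hp, hq⟩, rfl⟩
    have hlt1 : min p.2 q.2 < (p.2 + q.2)/2 := by
      rcases lt_or_gt_of_ne h2 with h | h
      · rw [min_eq_left h.le]; linarith
      · rw [min_eq_right h.le]; linarith
    have hlt2 : (p.2 + q.2)/2 < max p.2 q.2 := by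
      rcases lt_or_gt_of_ne h2 with h | h
      · rw [max_eq_right h.le]; linarith
      · rw [max_eq_left h.le]; linarith
    have hA : ∀ r : Pt, r.1 = 0 → cA r = r.2 ∧ cB r = r.2 ∧ cC r = r.2 := by
      intro r hr
      simp [cA, cB, cC, hr]
    obtain ⟨hAp, hBp, hCp⟩ := hA p hp1
    obtain ⟨hAq, hBq, hCq⟩ := hA q hq1
    obtain ⟨hAm, hBm, hCm⟩ := hA m rfl
    have hup : m ∈ upTriInt p q := by
      refine ⟨?_, ?_, ?_⟩ <;>
        simp only [hAp, hBp, hCp, hAq, hBq, hCq, hAm, hBm, hCm, hm] <;>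
        [exact hlt1; exact hBm.trans_lt hlt2; exact hCm.trans_lt hlt2]
    have hdown : m ∈ downTriInt p q := by
      refine ⟨?_, ?_, ?_⟩ <;>
        simp only [hAp, hBp, hCp, hAq, hBq, hCq, hAm, hBm, hCm, hm] <;>
        [exact hlt2; exact hlt1.trans_eq hBm.symm; exact hlt1.trans_eq hCm.symm]
    exact ⟨fun _ => ⟨m, hmB, hup⟩, fun _ => ⟨m, hmB, hdown⟩⟩
  exact ⟨B.card, P, B, hcard, hgp, hbl, rfl⟩

/-- For every `n ≥ 1`, `β(n+1) ≤ β(n) + 1`. -/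
theorem beta_succ_le (n : ℕ) (hn : 1 ≤ n) : betaMin (n + 1) ≤ betaMin n + 1 := by
  classical
  have hmem := Nat.sInf_mem (betaSet_nonempty n)
  obtain ⟨P, B, hPcard, hGP, hBl, hBcard⟩ := hmem
  have hPne : P.Nonempty := by
    rw [← Finset.card_pos, hPcard]; exact hn
  set f : Pt → ℝ := fun p => max (cA p) (max (cB p) (cC p)) with hf
  set M0 : ℝ := P.sup' hPne f with hM0
  have hle : ∀ p ∈ P, cA p ≤ M0 ∧ cB p ≤ M0 ∧ cC p ≤ M0 := by
    intro p hp
    have := Finset.le_sup' f hp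
    refine ⟨le_trans ?_ this, le_trans ?_ this, le_trans ?_ this⟩
    · exact le_max_left _ _
    · exact le_trans (le_max_left _ _) (le_max_right _ _)
    · exact le_trans (le_max_right _ _) (le_max_right _ _)
  set z : Pt := ((0:ℝ), M0 + 2) with hz
  set b : Pt := ((0:ℝ), M0 + 1) with hb
  have hcz : cA z = M0 + 2 ∧ cB z = M0 + 2 ∧ cC z = M0 + 2 := by
    refine ⟨rfl, ?_, ?_⟩ <;> simp [cB, cC, hz]
  have hcb : cA b = M0 + 1 ∧ cB b = M0 + 1 ∧ cC b = M0 + 1 := by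
    refine ⟨rfl, ?_, ?_⟩ <;> simp [cB, cC, hb]
  have hzP : z ∉ P := by
    intro h
    have := (hle z h).1
    rw [hcz.1] at this
    linarith
  set P' : Finset Pt := insert z P with hP'
  -- helper arithmetic facts about z vs points of P
  have harith : ∀ p ∈ P, p.2 < M0 + 2 ∧ p.2 + Real.sqrt 3 * p.1 < M0 + 2 ∧
      p.2 - Real.sqrt 3 * p.1 < M0 + 2 := by
    intro p hp
    obtain ⟨hA, hB, hC⟩ := hle p hp
    simp only [cA, cB, cC] at hA hB hC
    exact ⟨by linarith, by linarith, by linarith⟩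
  have hGP' : GenPos P' := by
    intro p hp q hq hne
    rw [hP', Finset.mem_insert] at hp hq
    rcases hp with rfl | hp
    · rcases hq with rfl | hq
      · exact absurd rfl hne
      · obtain ⟨h1, h2, h3⟩ := harith q hq
        refine ⟨?_, ?_, ?_⟩ <;> intro h <;> simp only [hz] at h <;> nlinarith [h]
    · rcases hq with rfl | hq
      · obtain ⟨h1, h2, h3⟩ := harith p hp
        refine ⟨?_, ?_, ?_⟩ <;> intro h <;> simp only [hz] at h <;> nlinarith [h]
      · exact hGP p hp q hq hne
  have hP'card : P'.card = n + 1 := by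
    rw [hP', Finset.card_insert_of_notMem hzP, hPcard]
  -- b lies in the interior of every triangle between z and a point of P
  have hbup : ∀ q ∈ P, b ∈ upTriInt z q ∧ b ∈ downTriInt z q := by
    intro q hq
    obtain ⟨hA, hB, hC⟩ := hle q hq
    constructor
    · refine ⟨?_, ?_, ?_⟩
      · calc min (cA z) (cA q) ≤ cA q := min_le_right _ _
          _ < cA b := by rw [hcb.1]; linarith
      · calc cB b = M0 + 1 := hcb.2.1
          _ < M0 + 2 := by linarith
          _ = cB z := hcz.2.1.symm
          _ ≤ max (cB z) (cB q) := le_max_left _ _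
      · calc cC b = M0 + 1 := hcb.2.2
          _ < M0 + 2 := by linarith
          _ = cC z := hcz.2.2.symm
          _ ≤ max (cC z) (cC q) := le_max_left _ _
    · refine ⟨?_, ?_, ?_⟩
      · calc cA b = M0 + 1 := hcb.1
          _ < M0 + 2 := by linarith
          _ = cA z := hcz.1.symm
          _ ≤ max (cA z) (cA q) := le_max_left _ _
      · calc min (cB z) (cB q) ≤ cB q := min_le_right _ _
          _ < cB b := by rw [hcb.2.1]; linarith
      · calc min (cC z) (cC q) ≤ cC q := min_le_right _ _
          _ < cC b := by rw [hcb.2.2]; linarith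
  set B' : Finset Pt := insert b B with hB'
  have hBl' : Blocks P' B' := by
    intro p hp q hq hne
    rw [hP', Finset.mem_insert] at hp hq
    rcases hp with rfl | hp
    · rcases hq with rfl | hq
      · exact absurd rfl hne
      · obtain ⟨h1, h2⟩ := hbup q hq
        exact ⟨fun _ => ⟨b, Finset.mem_insert_self _ _, h1⟩,
               fun _ => ⟨b, Finset.mem_insert_self _ _, h2⟩⟩
    · rcases hq with rfl | hq
      · obtain ⟨h1, h2⟩ := hbup p hp
        rw [upTriInt_comm] at h1
        rw [downTriInt_comm] at h2
        exact ⟨fun _ => ⟨b, Finset.mem_insert_self _ _, h1⟩,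
               fun _ => ⟨b, Finset.mem_insert_self _ _, h2⟩⟩
      · have hsub : ∀ r ∈ P, r ∈ P' := fun r hr => by
          rw [hP']; exact Finset.mem_insert_of_mem hr
        obtain ⟨hu, hd⟩ := hBl p hp q hq hne
        constructor
        · intro he
          obtain ⟨b0, hb0, hb0m⟩ := hu (fun r hr => he r (hsub r hr))
          exact ⟨b0, Finset.mem_insert_of_mem hb0, hb0m⟩
        · intro he
          obtain ⟨b0, hb0, hb0m⟩ := hd (fun r hr => he r (hsub r hr))
          exact ⟨b0, Finset.mem_insert_of_mem hb0, hb0m⟩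
  have hmem' : B'.card ∈ {k | ∃ P B : Finset Pt, P.card = n + 1 ∧ GenPos P ∧ Blocks P B ∧ B.card = k} :=
    ⟨P', B', hP'card, hGP', hBl', rfl⟩
  calc betaMin (n + 1) ≤ B'.card := Nat.sInf_le hmem'
    _ ≤ B.card + 1 := Finset.card_insert_le _ _
    _ = betaMin n + 1 := by rw [hBcard]; rfl
end
end

section
/- For every n ≥ 1, β(n) ≤ n − 1, where β(n) is the minimum over all sets P of n points in the plane in general position of the minimum size of a blocking set of the Θ6-graph G⋆(P). -/
noncomputable section

lemma sqrt3_gt_one : (1:ℝ) < Real.sqrt 3 := by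
  have h := Real.sq_sqrt (by norm_num : (3:ℝ) ≥ 0).le
  nlinarith [Real.sqrt_nonneg 3]

/-- A diagonal point strictly between two diagonal points lies in the interior of
both triangles of the pair. -/
lemma diag_mem_tri {a b x : ℝ} (h1 : min a b < x) (h2 : x < max a b) :
    ((x,x) : Pt) ∈ upTriInt (a,a) (b,b) ∧ ((x,x) : Pt) ∈ downTriInt (a,a) (b,b) := by
  have s3 := sqrt3_gt_one
  rcases le_total a b with hab | hab
  · rw [min_eq_left hab] at h1; rw [max_eq_right hab] at h2
    constructor <;>
      refine ⟨?_, ?_, ?_⟩ <;>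
      simp only [upTriInt, downTriInt, Set.mem_setOf_eq, cA, cB, cC] <;>
      rcases le_total (Real.sqrt 3 * a + a) (Real.sqrt 3 * b + b) with h|h <;>
      rcases le_total (-Real.sqrt 3 * a + a) (-Real.sqrt 3 * b + b) with h'|h' <;>
      simp only [min_def, max_def, h, h', min_eq_left hab, max_eq_right hab] <;>
      first | nlinarith | (split_ifs <;> nlinarith)
  · rw [min_eq_right hab] at h1; rw [max_eq_left hab] at h2
    constructor <;>
      refine ⟨?_, ?_, ?_⟩ <;>
      simp only [upTriInt, downTriInt, Set.mem_setOf_eq, cA, cB, cC] <;>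
      rcases le_total (Real.sqrt 3 * a + a) (Real.sqrt 3 * b + b) with h|h <;>
      rcases le_total (-Real.sqrt 3 * a + a) (-Real.sqrt 3 * b + b) with h'|h' <;>
      simp only [min_def, max_def, h, h', min_eq_right hab, max_eq_left hab] <;>
      first | nlinarith | (split_ifs <;> nlinarith)

/-- For every `n ≥ 1`, `β(n) ≤ n − 1`. -/
theorem beta_le_n_sub_one (n : ℕ) (hn : 1 ≤ n) : betaMin n ≤ n - 1 := by
  classical
  set f : ℕ → Pt := fun i => ((i:ℝ), (i:ℝ)) with hf
  set g : ℕ → Pt := fun i => ((i:ℝ) + 1/2, (i:ℝ) + 1/2) with hg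
  have finj : Function.Injective f := by
    intro i j h
    have : (i:ℝ) = j := congrArg Prod.fst h
    exact_mod_cast this
  have ginj : Function.Injective g := by
    intro i j h
    have : (i:ℝ) + 1/2 = (j:ℝ) + 1/2 := congrArg Prod.fst h
    have : (i:ℝ) = j := by linarith
    exact_mod_cast this
  set P : Finset Pt := (Finset.range n).image f with hP
  set B : Finset Pt := (Finset.range (n-1)).image g with hB
  have s3 := sqrt3_gt_one
  -- membership characterization
  have memP : ∀ p ∈ P, ∃ i < n, p = f i := by
    intro p hp
    simp only [hP, Finset.mem_image, Finset.mem_range] at hp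
    obtain ⟨i, hi, rfl⟩ := hp
    exact ⟨i, hi, rfl⟩
  have hcard : P.card = n := by
    rw [hP, Finset.card_image_of_injective _ finj, Finset.card_range]
  have hcardB : B.card = n - 1 := by
    rw [hB, Finset.card_image_of_injective _ ginj, Finset.card_range]
  have hgen : GenPos P := by
    intro p hp q hq hpq
    obtain ⟨i, hi, rfl⟩ := memP p hp
    obtain ⟨j, hj, rfl⟩ := memP q hq
    have hij : (i:ℝ) ≠ (j:ℝ) := by
      intro h; exact hpq (by simp [hf, h])
    have hd : (j:ℝ) - i ≠ 0 := sub_ne_zero_of_ne (Ne.symm hij)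
    refine ⟨hij, ?_, ?_⟩ <;> intro h <;> simp only [hf] at h
    · have h0 : (Real.sqrt 3 - 1) * ((j:ℝ) - i) = 0 := by ring_nf; linarith
      rcases mul_eq_zero.mp h0 with h1 | h1
      · linarith
      · exact hd h1
    · have h0 : (Real.sqrt 3 + 1) * ((j:ℝ) - i) = 0 := by ring_nf; linarith
      rcases mul_eq_zero.mp h0 with h1 | h1
      · linarith
      · exact hd h1
  -- key: if the triangle of f i, f j is empty then j = i+1 or i = j+1
  have hblocks : Blocks P B := by
    intro p hp q hq hpq
    obtain ⟨i, hi, rfl⟩ := memP p hp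
    obtain ⟨j, hj, rfl⟩ := memP q hq
    have hij : i ≠ j := fun h => hpq (by rw [h])
    -- wlog-style: define k = min, m = max
    set k := min i j with hk
    set m := max i j with hm
    have hkm : k < m := by
      rcases hij.lt_or_gt with h | h
      · simp [hk, hm, h, le_of_lt h]
      · simp [hk, hm, h, le_of_lt h]
    have hmn : m < n := by
      rcases max_choice i j with h | h <;> rw [hm, h] <;> assumption
    have hbetween : ∀ x : ℝ, (k:ℝ) < x → x < (m:ℝ) →
        ((x,x) : Pt) ∈ upTriInt (f i) (f j) ∧ ((x,x) : Pt) ∈ downTriInt (f i) (f j) := by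
      intro x hx1 hx2
      have hmin : min ((i:ℝ)) ((j:ℝ)) = (k:ℝ) := by
        rcases le_total i j with h | h
        · rw [min_eq_left (by exact_mod_cast h)]; simp [hk, min_eq_left h]
        · rw [min_eq_right (by exact_mod_cast h)]; simp [hk, min_eq_right h]
      have hmax : max ((i:ℝ)) ((j:ℝ)) = (m:ℝ) := by
        rcases le_total i j with h | h
        · rw [max_eq_right (by exact_mod_cast h)]; simp [hm, max_eq_right h]
        · rw [max_eq_left (by exact_mod_cast h)]; simp [hm, max_eq_left h]
      exact diag_mem_tri (by rw [hmin]; exact hx1) (by rw [hmax]; exact hx2)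
    -- if not consecutive, the intermediate point kills emptiness
    have hconsec : ∀ (wit : Pt → Prop),
        (∀ x : ℝ, (k:ℝ) < x → x < (m:ℝ) → wit ((x,x):Pt)) →
        (∀ r ∈ P, ¬ wit r) → m = k + 1 := by
      intro wit hwit hemp
      by_contra hne
      have hlt : k + 1 < m := lt_of_le_of_ne hkm fun h => hne h.symm
      have hmem : f (k+1) ∈ P := by
        simp only [hP, Finset.mem_image, Finset.mem_range]
        exact ⟨k+1, lt_trans hlt hmn, rfl⟩
      have hw : wit (f (k+1)) := by
        have : ((k:ℝ)+1, (k:ℝ)+1) = f (k+1) := by norm_num [hf]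
        rw [← this]
        exact hwit ((k:ℝ)+1) (by linarith) (by exact_mod_cast hlt)
      exact hemp _ hmem hw
    have hbB : g k ∈ B := by
      simp only [hB, Finset.mem_image, Finset.mem_range]
      refine ⟨k, ?_, rfl⟩
      omega
    have hgk : ∀ (S : Set Pt), (∀ x : ℝ, (k:ℝ) < x → x < (m:ℝ) → ((x,x):Pt) ∈ S) →
        m = k + 1 → g k ∈ S := by
      intro S hS hm1
      have : ((k:ℝ) + 1/2, (k:ℝ) + 1/2) ∈ S := by
        refine hS _ (by linarith) ?_
        rw [hm1]; push_cast; linarith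
      simpa [hg] using this
    constructor
    · intro hemp
      have hm1 : m = k + 1 := by
        refine hconsec (fun r => r ∈ upTriInt (f i) (f j))
          (fun x h1 h2 => (hbetween x h1 h2).1) hemp
      exact ⟨g k, hbB, hgk _ (fun x h1 h2 => (hbetween x h1 h2).1) hm1⟩
    · intro hemp
      have hm1 : m = k + 1 := by
        refine hconsec (fun r => r ∈ downTriInt (f i) (f j))
          (fun x h1 h2 => (hbetween x h1 h2).2) hemp
      exact ⟨g k, hbB, hgk _ (fun x h1 h2 => (hbetween x h1 h2).2) hm1⟩
  exact Nat.sInf_le ⟨P, B, hcard, hgen, hblocks, hcardB⟩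
end
end

section
/- Let P be a set of points in the plane in general position, let S ⊆ P, and let RC ⊆ P∖S be a set of points containing exactly one point from each connected component of the subgraph of G⋆(P) induced on P∖S. Then S blocks the Θ6-graph G⋆(RC): for every edge (c₁,c₂) of G⋆(RC), the empty (with respect to RC) triangle △(c₁,c₂) or ▽(c₁,c₂) introducing that edge contains a point of S in its interior. -/
noncomputable section

/-- Auxiliary: interior of an up/down triangle by flag. -/
def J (b : Bool) (p q : Pt) : Set Pt := if b then upTriInt p q else downTriInt p q

lemma J_comm (b : Bool) (p q : Pt) : J b p q = J b q p := by
  cases b <;> simp [J, upTriInt_comm, downTriInt_comm]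

lemma not_mem_upTriInt_right (p q : Pt) : q ∉ upTriInt p q := by
  intro h
  simp only [upTriInt, Set.mem_setOf_eq] at h
  obtain ⟨h1, h2, h3⟩ := h
  rw [min_lt_iff] at h1; rw [lt_max_iff] at h2; rw [lt_max_iff] at h3
  have k1 : cB p + cC p = 2 * cA p := by unfold cA cB cC; ring
  have k2 : cB q + cC q = 2 * cA q := by unfold cA cB cC; ring
  rcases h1 with h1 | h1 <;> rcases h2 with h2 | h2 <;> rcases h3 with h3 | h3 <;> linarith

lemma not_mem_downTriInt_right (p q : Pt) : q ∉ downTriInt p q := by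
  intro h
  simp only [downTriInt, Set.mem_setOf_eq] at h
  obtain ⟨h1, h2, h3⟩ := h
  rw [lt_max_iff] at h1; rw [min_lt_iff] at h2; rw [min_lt_iff] at h3
  have k1 : cB p + cC p = 2 * cA p := by unfold cA cB cC; ring
  have k2 : cB q + cC q = 2 * cA q := by unfold cA cB cC; ring
  rcases h1 with h1 | h1 <;> rcases h2 with h2 | h2 <;> rcases h3 with h3 | h3 <;> linarith

lemma not_mem_J_right (b : Bool) (p q : Pt) : q ∉ J b p q := by
  cases b
  · simpa [J] using not_mem_downTriInt_right p q
  · simpa [J] using not_mem_upTriInt_right p q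

lemma not_mem_J_left (b : Bool) (p q : Pt) : p ∉ J b p q := by
  rw [J_comm]; exact not_mem_J_right b q p

lemma upTriInt_subset {p q r : Pt} (hr : r ∈ upTriInt p q) : upTriInt p r ⊆ upTriInt p q := by
  obtain ⟨h1, h2, h3⟩ := hr
  intro x hx
  obtain ⟨g1, g2, g3⟩ := hx
  exact ⟨(le_min (min_le_left _ _) h1.le).trans_lt g1,
    g2.trans_le (max_le (le_max_left _ _) h2.le),
    g3.trans_le (max_le (le_max_left _ _) h3.le)⟩

lemma downTriInt_subset {p q r : Pt} (hr : r ∈ downTriInt p q) :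
    downTriInt p r ⊆ downTriInt p q := by
  obtain ⟨h1, h2, h3⟩ := hr
  intro x hx
  obtain ⟨g1, g2, g3⟩ := hx
  exact ⟨g1.trans_le (max_le (le_max_left _ _) h1.le),
    (le_min (min_le_left _ _) h2.le).trans_lt g2,
    (le_min (min_le_left _ _) h3.le).trans_lt g3⟩

lemma J_subset_left (b : Bool) {p q r : Pt} (hr : r ∈ J b p q) : J b p r ⊆ J b p q := by
  cases b
  · simp only [J, if_neg Bool.false_ne_true] at *
    exact downTriInt_subset hr
  · simp only [J, if_pos rfl] at *
    exact upTriInt_subset hr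

lemma J_subset_right (b : Bool) {p q r : Pt} (hr : r ∈ J b p q) : J b r q ⊆ J b p q := by
  rw [J_comm b p q] at hr
  rw [J_comm b r q, J_comm b p q]
  exact J_subset_left b hr

lemma reach_edge (P S : Finset Pt) (b : Bool) (p q : Pt) (hp : p ∈ P) (hq : q ∈ P)
    (hps : p ∉ S) (hqs : q ∉ S) (hne : p ≠ q) (hempty : ∀ r ∈ P, r ∉ J b p q) :
    ((theta6 P).induce {v : {x // x ∈ P} | v.1 ∉ S}).Reachable ⟨⟨p, hp⟩, hps⟩ ⟨⟨q, hq⟩, hqs⟩ := by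
  apply SimpleGraph.Adj.reachable
  show (theta6 P).Adj ⟨p, hp⟩ ⟨q, hq⟩
  refine ⟨by simpa [Subtype.ext_iff] using hne, ?_⟩
  cases b
  · exact Or.inr (fun r hr => by simpa [J] using hempty r hr)
  · exact Or.inl (fun r hr => by simpa [J] using hempty r hr)

open scoped Classical in
lemma reach_aux (P S : Finset Pt) (b : Bool) :
    ∀ n (p q : Pt) (hp : p ∈ P) (hq : q ∈ P) (hps : p ∉ S) (hqs : q ∉ S),
      p ≠ q → (∀ s ∈ S, s ∉ J b p q) →
      (P.filter (fun r => r ∈ J b p q)).card ≤ n →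
      ((theta6 P).induce {v : {x // x ∈ P} | v.1 ∉ S}).Reachable
        ⟨⟨p, hp⟩, hps⟩ ⟨⟨q, hq⟩, hqs⟩ := by
  intro n
  induction n with
  | zero =>
    intro p q hp hq hps hqs hne hSfree hcard
    refine reach_edge P S b p q hp hq hps hqs hne (fun r hr hmem => ?_)
    have : r ∈ P.filter (fun r => r ∈ J b p q) := Finset.mem_filter.2 ⟨hr, hmem⟩
    have := Finset.card_pos.2 ⟨r, this⟩
    omega
  | succ n ih =>
    intro p q hp hq hps hqs hne hSfree hcard
    by_cases hx : ∃ r ∈ P, r ∈ J b p q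
    · obtain ⟨r, hrP, hrJ⟩ := hx
      have hrS : r ∉ S := fun h => hSfree r h hrJ
      have hrp : r ≠ p := fun h => not_mem_J_left b p q (h ▸ hrJ)
      have hrq : r ≠ q := fun h => not_mem_J_right b p q (h ▸ hrJ)
      have hrfilt : r ∈ P.filter (fun r => r ∈ J b p q) := Finset.mem_filter.2 ⟨hrP, hrJ⟩
      have hcard' : ∀ (s : Set Pt), s ⊆ J b p q → (∀ x, x ∈ s → x ≠ r) →
          (P.filter (fun x => x ∈ s)).card ≤ n := by
        intro s hsub hnr
        have hsub2 : P.filter (fun x => x ∈ s) ⊆ (P.filter (fun r => r ∈ J b p q)).erase r := by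
          intro x hxm
          obtain ⟨hxP, hxs⟩ := Finset.mem_filter.1 hxm
          exact Finset.mem_erase.2 ⟨hnr x hxs, Finset.mem_filter.2 ⟨hxP, hsub hxs⟩⟩
        have := Finset.card_le_card hsub2
        rw [Finset.card_erase_of_mem hrfilt] at this
        omega
      have h1 : ((theta6 P).induce {v : {x // x ∈ P} | v.1 ∉ S}).Reachable
          ⟨⟨p, hp⟩, hps⟩ ⟨⟨r, hrP⟩, hrS⟩ := by
        apply ih p r hp hrP hps hrS (Ne.symm hrp)
          (fun s hs hmem => hSfree s hs (J_subset_left b hrJ hmem))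
        exact hcard' _ (J_subset_left b hrJ)
          (fun x hx hxr => not_mem_J_right b p r (hxr ▸ hx))
      have h2 : ((theta6 P).induce {v : {x // x ∈ P} | v.1 ∉ S}).Reachable
          ⟨⟨r, hrP⟩, hrS⟩ ⟨⟨q, hq⟩, hqs⟩ := by
        apply ih r q hrP hq hrS hqs hrq
          (fun s hs hmem => hSfree s hs (J_subset_right b hrJ hmem))
        exact hcard' _ (J_subset_right b hrJ)
          (fun x hx hxr => not_mem_J_left b r q (hxr ▸ hx))
      exact h1.trans h2
    · push_neg at hx
      exact reach_edge P S b p q hp hq hps hqs hne hx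

/-- If `RC ⊆ P \ S` contains exactly one point from each connected component of the
subgraph of `G⋆(P)` induced on `P \ S`, then `S` blocks `G⋆(RC)`. -/
theorem representatives_blocked (P S RC : Finset Pt) (hP : GenPos P) (hS : S ⊆ P)
    (hRC : RC ⊆ P \ S)
    (hrep : ∀ C : ((theta6 P).induce {v : {x // x ∈ P} | v.1 ∉ S}).ConnectedComponent,
      ∃! v : {v : {x // x ∈ P} | v.1 ∉ S},
        v.1.1 ∈ RC ∧
        ((theta6 P).induce {v : {x // x ∈ P} | v.1 ∉ S}).connectedComponentMk v = C) :
    Blocks RC S := by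
  intro p hp q hq hne
  obtain ⟨hpP, hpS⟩ := Finset.mem_sdiff.1 (hRC hp)
  obtain ⟨hqP, hqS⟩ := Finset.mem_sdiff.1 (hRC hq)
  have key : ∀ b : Bool, (∀ s ∈ S, s ∉ J b p q) → False := by
    intro b hSfree
    classical
    have hreach := reach_aux P S b (P.filter (fun r => r ∈ J b p q)).card p q
      hpP hqP hpS hqS hne hSfree le_rfl
    set G := (theta6 P).induce {v : {x // x ∈ P} | v.1 ∉ S}
    set vp : {v : {x // x ∈ P} | v.1 ∉ S} := ⟨⟨p, hpP⟩, hpS⟩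
    set vq : {v : {x // x ∈ P} | v.1 ∉ S} := ⟨⟨q, hqP⟩, hqS⟩
    obtain ⟨v, _, huniq⟩ := hrep (G.connectedComponentMk vq)
    have h1 : vp = v := huniq vp ⟨hp, SimpleGraph.ConnectedComponent.sound hreach⟩
    have h2 : vq = v := huniq vq ⟨hq, rfl⟩
    have : p = q := by
      have := h1.trans h2.symm
      simpa [vp, vq, Subtype.ext_iff] using this
    exact hne this
  constructor
  · intro _
    by_contra hcon
    push_neg at hcon
    exact key true (fun s hs => by simpa [J] using hcon s hs)
  · intro _
    by_contra hcon
    push_neg at hcon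
    exact key false (fun s hs => by simpa [J] using hcon s hs)
end
end

section
/- There are infinitely many n for which there exists a set P of n points in the plane in general position such that every strong matching in the Θ6-graph G⋆(P) has at most 2n/5 edges; in particular, μ*(n) ≤ 2n/5 for infinitely many n. -/
noncomputable section

namespace SMUB


def lAz : Fin 5 → ℤ := ![8,3,6,0,4]
def lBz : Fin 5 → ℤ := ![9,5,13,7,8]
def lCz : Fin 5 → ℤ := ![7,1,-1,-7,0]

def lA (s : Fin 5) : ℝ := (lAz s : ℝ)
def lB (s : Fin 5) : ℝ := (lBz s : ℝ)
def lC (s : Fin 5) : ℝ := (lCz s : ℝ)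

def wit (β γ : ℝ) : Pt := ((β - γ)/(2*Real.sqrt 3), (β+γ)/2)

lemma s3_pos : (0:ℝ) < Real.sqrt 3 := Real.sqrt_pos.mpr (by norm_num)
lemma s3_ne : Real.sqrt 3 ≠ 0 := ne_of_gt s3_pos

@[simp] lemma cA_wit (β γ : ℝ) : cA (wit β γ) = (β+γ)/2 := rfl
@[simp] lemma cB_wit (β γ : ℝ) : cB (wit β γ) = β := by
  unfold cB wit
  have h := s3_ne
  field_simp
  ring
@[simp] lemma cC_wit (β γ : ℝ) : cC (wit β γ) = γ := by
  unfold cC wit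
  have h := s3_ne
  field_simp
  ring

def Q (i : ℕ) (s : Fin 5) : Pt := wit (lB s + 1000100*(i:ℝ)) (lC s + (-999900)*(i:ℝ))

@[simp] lemma cB_Q (i : ℕ) (s : Fin 5) : cB (Q i s) = lB s + 1000100*(i:ℝ) := cB_wit _ _
@[simp] lemma cC_Q (i : ℕ) (s : Fin 5) : cC (Q i s) = lC s + (-999900)*(i:ℝ) := cC_wit _ _
@[simp] lemma cA_Q (i : ℕ) (s : Fin 5) : cA (Q i s) = lA s + 100*(i:ℝ) := by
  have hz : ∀ s, lBz s + lCz s = 2 * lAz s := by decide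
  have hz' := hz s
  show ((lB s + 1000100*(i:ℝ)) + (lC s + (-999900)*(i:ℝ)))/2 = lA s + 100*(i:ℝ)
  unfold lA lB lC
  have : (lBz s : ℝ) + (lCz s : ℝ) = 2 * (lAz s : ℝ) := by exact_mod_cast hz'
  linarith

lemma lA_nonneg (s : Fin 5) : 0 ≤ lA s := by
  unfold lA
  have : ∀ s, (0:ℤ) ≤ lAz s := by decide
  exact_mod_cast this s
lemma lA_le (s : Fin 5) : lA s ≤ 8 := by
  unfold lA
  have : ∀ s, lAz s ≤ 8 := by decide
  exact_mod_cast this s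
lemma lB_ge (s : Fin 5) : 5 ≤ lB s := by
  unfold lB
  have : ∀ s, (5:ℤ) ≤ lBz s := by decide
  exact_mod_cast this s
lemma lB_le (s : Fin 5) : lB s ≤ 13 := by
  unfold lB
  have : ∀ s, lBz s ≤ 13 := by decide
  exact_mod_cast this s
lemma lC_ge (s : Fin 5) : -7 ≤ lC s := by
  unfold lC
  have : ∀ s, (-7:ℤ) ≤ lCz s := by decide
  exact_mod_cast this s
lemma lC_le (s : Fin 5) : lC s ≤ 7 := by
  unfold lC
  have : ∀ s, lCz s ≤ 7 := by decide
  exact_mod_cast this s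
lemma lB_gt_of_ne1 {s : Fin 5} (h : s ≠ 1) : 5 < lB s := by
  unfold lB
  have : ∀ s : Fin 5, s ≠ 1 → (5:ℤ) < lBz s := by decide
  exact_mod_cast this s h
lemma lB_lt_of_ne2 {s : Fin 5} (h : s ≠ 2) : lB s < 13 := by
  unfold lB
  have : ∀ s : Fin 5, s ≠ 2 → lBz s < 13 := by decide
  exact_mod_cast this s h
lemma lA_inj {s s' : Fin 5} (h : lA s = lA s') : s = s' := by
  unfold lA at h
  have hz : lAz s = lAz s' := by exact_mod_cast h
  have : ∀ s t : Fin 5, lAz s = lAz t → s = t := by decide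
  exact this s s' hz
lemma lB_inj {s s' : Fin 5} (h : lB s = lB s') : s = s' := by
  unfold lB at h
  have hz : lBz s = lBz s' := by exact_mod_cast h
  have : ∀ s t : Fin 5, lBz s = lBz t → s = t := by decide
  exact this s s' hz
lemma lC_inj {s s' : Fin 5} (h : lC s = lC s') : s = s' := by
  unfold lC at h
  have hz : lCz s = lCz s' := by exact_mod_cast h
  have : ∀ s t : Fin 5, lCz s = lCz t → s = t := by decide
  exact this s s' hz

lemma sep {u v α : ℝ} (hu1 : -20 ≤ u) (hu2 : u ≤ 20) (hv1 : -20 ≤ v) (hv2 : v ≤ 20)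
    {i i' : ℕ} (hα : 100 ≤ α) (h : u + α*(i:ℝ) = v + α*(i':ℝ)) : i = i' := by
  rcases lt_trichotomy i i' with hlt | he | hlt
  · exfalso
    have h1 : (i:ℝ) + 1 ≤ (i':ℝ) := by exact_mod_cast hlt
    nlinarith
  · exact he
  · exfalso
    have h1 : (i':ℝ) + 1 ≤ (i:ℝ) := by exact_mod_cast hlt
    nlinarith

lemma Q_inj {i i' : ℕ} {s s' : Fin 5} (h : Q i s = Q i' s') : i = i' ∧ s = s' := by
  have hB := congrArg cB h
  have hC := congrArg cC h
  rw [cB_Q, cB_Q] at hB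
  rw [cC_Q, cC_Q] at hC
  have hii : i = i' := by
    refine sep (by linarith [lB_ge s]) (by linarith [lB_le s]) (by linarith [lB_ge s'])
      (by linarith [lB_le s']) (α := 1000100) (by norm_num) hB
  subst hii
  have : lB s = lB s' := by linarith
  exact ⟨rfl, lB_inj this⟩


def GenPos (P : Finset Pt) : Prop :=
  ∀ p ∈ P, ∀ q ∈ P, p ≠ q →
    p.2 ≠ q.2 ∧
    q.2 - p.2 ≠ Real.sqrt 3 * (q.1 - p.1) ∧
    q.2 - p.2 ≠ -Real.sqrt 3 * (q.1 - p.1)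

def Pk (k : ℕ) : Finset Pt := (Finset.range k ×ˢ (Finset.univ : Finset (Fin 5))).image fun z => Q z.1 z.2

lemma mem_Pk {k : ℕ} {x : Pt} : x ∈ Pk k ↔ ∃ i < k, ∃ s : Fin 5, x = Q i s := by
  simp only [Pk, Finset.mem_image, Finset.mem_product, Finset.mem_range, Finset.mem_univ,
    and_true, Prod.exists]
  constructor
  · rintro ⟨i, s, hi, rfl⟩
    exact ⟨i, hi, s, rfl⟩
  · rintro ⟨i, hi, s, rfl⟩
    exact ⟨i, s, hi, rfl⟩

lemma card_Pk (k : ℕ) : (Pk k).card = 5 * k := by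
  rw [Pk, Finset.card_image_of_injOn, Finset.card_product, Finset.card_range, Finset.card_univ]
  · simp [mul_comm]
  · intro z _ z' _ h
    obtain ⟨h1, h2⟩ := Q_inj h
    exact Prod.ext h1 h2

lemma genpos_Pk (k : ℕ) : GenPos (Pk k) := by
  intro p hp q hq hpq
  obtain ⟨i, _, s, rfl⟩ := mem_Pk.mp hp
  obtain ⟨j, _, t, rfl⟩ := mem_Pk.mp hq
  have hne : ¬ (i = j ∧ s = t) := by
    rintro ⟨rfl, rfl⟩; exact hpq rfl
  refine ⟨?_, ?_, ?_⟩
  · intro h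
    have hA : cA (Q i s) = cA (Q j t) := h
    rw [cA_Q, cA_Q] at hA
    have hij : i = j := sep (by linarith [lA_nonneg s]) (by linarith [lA_le s])
      (by linarith [lA_nonneg t]) (by linarith [lA_le t]) (α := 100) (by norm_num) hA
    subst hij
    exact hne ⟨rfl, lA_inj (by linarith)⟩
  · intro h
    have hC : cC (Q i s) = cC (Q j t) := by
      unfold cC
      linear_combination -h
    rw [cC_Q, cC_Q] at hC
    have hC' : -lC s + 999900*(i:ℝ) = -lC t + 999900*(j:ℝ) := by linarith
    have hij : i = j := sep (by linarith [lC_le s]) (by linarith [lC_ge s])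
      (by linarith [lC_le t]) (by linarith [lC_ge t]) (α := 999900) (by norm_num) hC'
    subst hij
    exact hne ⟨rfl, lC_inj (by linarith)⟩
  · intro h
    have hB : cB (Q i s) = cB (Q j t) := by
      unfold cB
      linear_combination -h
    rw [cB_Q, cB_Q] at hB
    have hij : i = j := sep (by linarith [lB_ge s]) (by linarith [lB_le s])
      (by linarith [lB_ge t]) (by linarith [lB_le t]) (α := 1000100) (by norm_num) hB
    subst hij
    exact hne ⟨rfl, lB_inj (by linarith)⟩

def clu (x : Pt) : ℕ := ⌊x.2 / 100⌋₊

lemma clu_Q (i : ℕ) (s : Fin 5) : clu (Q i s) = i := by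
  have hx : (Q i s).2 = lA s + 100*(i:ℝ) := cA_Q i s
  unfold clu
  rw [hx]
  have h1 : (lA s + 100*(i:ℝ))/100 = lA s / 100 + (i:ℕ) := by push_cast; ring
  rw [h1, Nat.floor_add_natCast (div_nonneg (lA_nonneg s) (by norm_num)), Nat.floor_eq_zero.mpr, zero_add]
  rw [div_lt_one (by norm_num)]
  linarith [lA_le s]


lemma lB_one : lB 1 = 5 := by
  have : lBz 1 = 5 := by decide
  unfold lB; exact_mod_cast this
lemma lB_two : lB 2 = 13 := by
  have : lBz 2 = 13 := by decide
  unfold lB; exact_mod_cast this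

lemma mem_triCl_fst (t : Pt × Pt × Bool) : t.1 ∈ triCl t := by
  unfold triCl
  by_cases hb : t.2.2
  · rw [if_pos hb]
    exact ⟨min_le_left _ _, le_max_left _ _, le_max_left _ _⟩
  · rw [if_neg hb]
    exact ⟨le_max_left _ _, min_le_left _ _, min_le_left _ _⟩

lemma mem_triCl_snd (t : Pt × Pt × Bool) : t.2.1 ∈ triCl t := by
  unfold triCl
  by_cases hb : t.2.2
  · rw [if_pos hb]
    exact ⟨min_le_right _ _, le_max_right _ _, le_max_right _ _⟩
  · rw [if_neg hb]
    exact ⟨le_max_right _ _, min_le_right _ _, min_le_right _ _⟩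

lemma intra_mem_up {i : ℕ} {s s' : Fin 5} {t : Pt × Pt × Bool}
    (h1 : t.1 = Q i s) (h2 : t.2.1 = Q i s') (hb : t.2.2 = true)
    {β γ : ℝ} (hA : 2 * min (lA s) (lA s') ≤ β + γ)
    (hB : β ≤ max (lB s) (lB s')) (hC : γ ≤ max (lC s) (lC s')) :
    wit (β + 1000100*(i:ℝ)) (γ + (-999900)*(i:ℝ)) ∈ triCl t := by
  unfold triCl
  rw [hb, if_pos rfl, h1, h2]
  refine ⟨?_, ?_, ?_⟩
  · rw [cA_Q, cA_Q, cA_wit, min_add_add_right]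
    have h : (β + 1000100*(i:ℝ) + (γ + (-999900)*(i:ℝ)))/2 = (β+γ)/2 + 100*(i:ℝ) := by ring
    rw [h]; linarith
  · rw [cB_Q, cB_Q, cB_wit, max_add_add_right]
    linarith
  · rw [cC_Q, cC_Q, cC_wit, max_add_add_right]
    linarith

lemma intra_mem_dn {i : ℕ} {s s' : Fin 5} {t : Pt × Pt × Bool}
    (h1 : t.1 = Q i s) (h2 : t.2.1 = Q i s') (hb : t.2.2 = false)
    {β γ : ℝ} (hA : β + γ ≤ 2 * max (lA s) (lA s'))
    (hB : min (lB s) (lB s') ≤ β) (hC : min (lC s) (lC s') ≤ γ) :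
    wit (β + 1000100*(i:ℝ)) (γ + (-999900)*(i:ℝ)) ∈ triCl t := by
  unfold triCl
  rw [hb, if_neg (by simp), h1, h2]
  refine ⟨?_, ?_, ?_⟩
  · rw [cA_Q, cA_Q, cA_wit, max_add_add_right]
    have h : (β + 1000100*(i:ℝ) + (γ + (-999900)*(i:ℝ)))/2 = (β+γ)/2 + 100*(i:ℝ) := by ring
    rw [h]; linarith
  · rw [cB_Q, cB_Q, cB_wit, min_add_add_right]
    linarith
  · rw [cC_Q, cC_Q, cC_wit, min_add_add_right]
    linarith


lemma nat_succ_le {i j : ℕ} (h : i < j) : (i:ℝ) + 1 ≤ (j:ℝ) := by exact_mod_cast h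

def assign (t : Pt × Pt × Bool) : ℕ :=
  if t.2.2 then max (clu t.1) (clu t.2.1) else min (clu t.1) (clu t.2.1)

lemma classify {k i : ℕ} {t : Pt × Pt × Bool} (ht : IsEmptyTriOf (Pk k) t)
    (ha : assign t = i) :
    (∃ s s' : Fin 5, s ≠ s' ∧ t.1 = Q i s ∧ t.2.1 = Q i s') ∨
    ((Q i 1 ∈ triCl t) ∧ ∀ β γ : ℝ, 0 ≤ β + γ → β ≤ 5 → γ ≤ 7 →
        wit (β + 1000100*(i:ℝ)) (γ + (-999900)*(i:ℝ)) ∈ triCl t) ∨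
    ((Q i 2 ∈ triCl t) ∧ ∀ β γ : ℝ, β + γ ≤ 200 → 13 ≤ β → -7 ≤ γ →
        wit (β + 1000100*(i:ℝ)) (γ + (-999900)*(i:ℝ)) ∈ triCl t) := by
  obtain ⟨h1, h2, hne, hemp⟩ := ht
  obtain ⟨i₁, hi₁, s₁, he₁⟩ := mem_Pk.mp h1
  obtain ⟨i₂, hi₂, s₂, he₂⟩ := mem_Pk.mp h2
  have hc1 : clu t.1 = i₁ := by rw [he₁]; exact clu_Q _ _
  have hc2 : clu t.2.1 = i₂ := by rw [he₂]; exact clu_Q _ _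
  unfold assign at ha
  rw [hc1, hc2] at ha
  rcases Nat.lt_trichotomy i₁ i₂ with hlt | heq | hlt
  · -- i₁ < i₂ : t.1 is in the lower cluster
    have hstep := nat_succ_le hlt
    cases hb : t.2.2 with
    | true =>
      -- up triangle, i = i₂
      rw [hb, if_pos rfl, Nat.max_eq_right hlt.le] at ha
      subst ha
      have hs2 : s₂ = 1 := by
        by_contra hs
        refine hemp (Q i₂ 1) (mem_Pk.mpr ⟨i₂, hi₂, 1, rfl⟩) ?_
        unfold triIntr
        rw [hb, if_pos rfl]
        refine ⟨?_, ?_, ?_⟩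
        · refine lt_of_le_of_lt (min_le_left _ _) ?_
          rw [he₁, cA_Q, cA_Q]
          have := lA_le s₁
          have := lA_nonneg (1 : Fin 5)
          nlinarith
        · refine lt_of_lt_of_le ?_ (le_max_right _ _)
          rw [he₂, cB_Q, cB_Q, lB_one]
          have := lB_gt_of_ne1 hs
          linarith
        · refine lt_of_lt_of_le ?_ (le_max_left _ _)
          rw [he₁, cC_Q, cC_Q]
          have := lC_ge s₁
          have := lC_le (1 : Fin 5)
          nlinarith
      subst hs2
      refine Or.inr (Or.inl ⟨?_, ?_⟩)
      · rw [← he₂]; exact mem_triCl_snd t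
      · intro β γ hbg hβ hγ
        unfold triCl
        rw [hb, if_pos rfl]
        refine ⟨?_, ?_, ?_⟩
        · refine le_trans (min_le_left _ _) ?_
          rw [he₁, cA_Q, cA_wit]
          have := lA_le s₁
          nlinarith
        · refine le_trans ?_ (le_max_right _ _)
          rw [he₂, cB_Q, cB_wit, lB_one]
          linarith
        · refine le_trans ?_ (le_max_left _ _)
          rw [he₁, cC_Q, cC_wit]
          have := lC_ge s₁
          nlinarith
    | false =>
      -- down triangle, i = i₁
      rw [hb, if_neg (by simp), Nat.min_eq_left hlt.le] at ha
      subst ha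
      have hs1 : s₁ = 2 := by
        by_contra hs
        refine hemp (Q i₁ 2) (mem_Pk.mpr ⟨i₁, hi₁, 2, rfl⟩) ?_
        unfold triIntr
        rw [hb, if_neg (by simp)]
        refine ⟨?_, ?_, ?_⟩
        · refine lt_of_lt_of_le ?_ (le_max_right _ _)
          rw [he₂, cA_Q, cA_Q]
          have := lA_le (2 : Fin 5)
          have := lA_nonneg s₂
          nlinarith
        · refine lt_of_le_of_lt (min_le_left _ _) ?_
          rw [he₁, cB_Q, cB_Q, lB_two]
          have := lB_lt_of_ne2 hs
          linarith
        · refine lt_of_le_of_lt (min_le_right _ _) ?_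
          rw [he₂, cC_Q, cC_Q]
          have := lC_le s₂
          have := lC_ge (2 : Fin 5)
          nlinarith
      subst hs1
      refine Or.inr (Or.inr ⟨?_, ?_⟩)
      · rw [← he₁]; exact mem_triCl_fst t
      · intro β γ hbg hβ hγ
        unfold triCl
        rw [hb, if_neg (by simp)]
        refine ⟨?_, ?_, ?_⟩
        · refine le_trans ?_ (le_max_right _ _)
          rw [he₂, cA_Q, cA_wit]
          have := lA_nonneg s₂
          nlinarith
        · refine le_trans (min_le_left _ _) ?_
          rw [he₁, cB_Q, cB_wit, lB_two]
          linarith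
        · refine le_trans (min_le_right _ _) ?_
          rw [he₂, cC_Q, cC_wit]
          have := lC_le s₂
          nlinarith
  · -- same cluster
    subst heq
    have hii : i₁ = i := by
      rcases hb : t.2.2 <;> rw [hb] at ha <;> simpa using ha
    subst hii
    refine Or.inl ⟨s₁, s₂, ?_, he₁, he₂⟩
    intro hss
    apply hne
    rw [he₁, he₂, hss]
  · -- i₂ < i₁ : t.2.1 in the lower cluster
    have hstep := nat_succ_le hlt
    cases hb : t.2.2 with
    | true =>
      rw [hb, if_pos rfl, Nat.max_eq_left hlt.le] at ha
      subst ha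
      have hs1 : s₁ = 1 := by
        by_contra hs
        refine hemp (Q i₁ 1) (mem_Pk.mpr ⟨i₁, hi₁, 1, rfl⟩) ?_
        unfold triIntr
        rw [hb, if_pos rfl]
        refine ⟨?_, ?_, ?_⟩
        · refine lt_of_le_of_lt (min_le_right _ _) ?_
          rw [he₂, cA_Q, cA_Q]
          have := lA_le s₂
          have := lA_nonneg (1 : Fin 5)
          nlinarith
        · refine lt_of_lt_of_le ?_ (le_max_left _ _)
          rw [he₁, cB_Q, cB_Q, lB_one]
          have := lB_gt_of_ne1 hs
          linarith
        · refine lt_of_lt_of_le ?_ (le_max_right _ _)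
          rw [he₂, cC_Q, cC_Q]
          have := lC_ge s₂
          have := lC_le (1 : Fin 5)
          nlinarith
      subst hs1
      refine Or.inr (Or.inl ⟨?_, ?_⟩)
      · rw [← he₁]; exact mem_triCl_fst t
      · intro β γ hbg hβ hγ
        unfold triCl
        rw [hb, if_pos rfl]
        refine ⟨?_, ?_, ?_⟩
        · refine le_trans (min_le_right _ _) ?_
          rw [he₂, cA_Q, cA_wit]
          have := lA_le s₂
          nlinarith
        · refine le_trans ?_ (le_max_left _ _)
          rw [he₁, cB_Q, cB_wit, lB_one]
          linarith
        · refine le_trans ?_ (le_max_right _ _)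
          rw [he₂, cC_Q, cC_wit]
          have := lC_ge s₂
          nlinarith
    | false =>
      rw [hb, if_neg (by simp), Nat.min_eq_right hlt.le] at ha
      subst ha
      have hs2 : s₂ = 2 := by
        by_contra hs
        refine hemp (Q i₂ 2) (mem_Pk.mpr ⟨i₂, hi₂, 2, rfl⟩) ?_
        unfold triIntr
        rw [hb, if_neg (by simp)]
        refine ⟨?_, ?_, ?_⟩
        · refine lt_of_lt_of_le ?_ (le_max_left _ _)
          rw [he₁, cA_Q, cA_Q]
          have := lA_le (2 : Fin 5)
          have := lA_nonneg s₁
          nlinarith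
        · refine lt_of_le_of_lt (min_le_right _ _) ?_
          rw [he₂, cB_Q, cB_Q, lB_two]
          have := lB_lt_of_ne2 hs
          linarith
        · refine lt_of_le_of_lt (min_le_left _ _) ?_
          rw [he₁, cC_Q, cC_Q]
          have := lC_le s₁
          have := lC_ge (2 : Fin 5)
          nlinarith
      subst hs2
      refine Or.inr (Or.inr ⟨?_, ?_⟩)
      · rw [← he₂]; exact mem_triCl_snd t
      · intro β γ hbg hβ hγ
        unfold triCl
        rw [hb, if_neg (by simp)]
        refine ⟨?_, ?_, ?_⟩
        · refine le_trans ?_ (le_max_left _ _)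
          rw [he₁, cA_Q, cA_wit]
          have := lA_nonneg s₁
          nlinarith
        · refine le_trans (min_le_right _ _) ?_
          rw [he₂, cB_Q, cB_wit, lB_two]
          linarith
        · refine le_trans (min_le_left _ _) ?_
          rw [he₁, cC_Q, cC_wit]
          have := lC_le s₁
          nlinarith


def uAz (a b : Fin 5) : ℤ := min (lAz a) (lAz b)
def uBz (a b : Fin 5) : ℤ := max (lBz a) (lBz b)
def uCz (a b : Fin 5) : ℤ := max (lCz a) (lCz b)
def dAz (a b : Fin 5) : ℤ := max (lAz a) (lAz b)
def dBz (a b : Fin 5) : ℤ := min (lBz a) (lBz b)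
def dCz (a b : Fin 5) : ℤ := min (lCz a) (lCz b)

lemma uA_cast (a b : Fin 5) : ((uAz a b : ℤ) : ℝ) = min (lA a) (lA b) := by
  unfold uAz lA; push_cast; rfl
lemma uB_cast (a b : Fin 5) : ((uBz a b : ℤ) : ℝ) = max (lB a) (lB b) := by
  unfold uBz lB; push_cast; rfl
lemma uC_cast (a b : Fin 5) : ((uCz a b : ℤ) : ℝ) = max (lC a) (lC b) := by
  unfold uCz lC; push_cast; rfl
lemma dA_cast (a b : Fin 5) : ((dAz a b : ℤ) : ℝ) = max (lA a) (lA b) := by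
  unfold dAz lA; push_cast; rfl
lemma dB_cast (a b : Fin 5) : ((dBz a b : ℤ) : ℝ) = min (lB a) (lB b) := by
  unfold dBz lB; push_cast; rfl
lemma dC_cast (a b : Fin 5) : ((dCz a b : ℤ) : ℝ) = min (lC a) (lC b) := by
  unfold dCz lC; push_cast; rfl

lemma disj_absurd {t t' : Pt × Pt × Bool} (hd : Disjoint (triCl t) (triCl t'))
    {x : Pt} (h1 : x ∈ triCl t) (h2 : x ∈ triCl t') : False :=
  Set.disjoint_left.mp hd h1 h2

lemma Zcu : ∀ a b : Fin 5, 2*uAz a b - uCz a b ≤ uBz a b := by decide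
lemma Zcd : ∀ a b : Fin 5, dBz a b ≤ 2*dAz a b - dCz a b := by decide

/-- corner of an up intra triangle lies in the triangle and (when the kill condition
holds) in the up-cross box. -/
lemma kill_up {i : ℕ} {s s' : Fin 5} {t u : Pt × Pt × Bool}
    (h1 : t.1 = Q i s) (h2 : t.2.1 = Q i s') (hb : t.2.2 = true)
    (hubox : ∀ β γ : ℝ, 0 ≤ β + γ → β ≤ 5 → γ ≤ 7 →
        wit (β + 1000100*(i:ℝ)) (γ + (-999900)*(i:ℝ)) ∈ triCl u)
    (hd : Disjoint (triCl t) (triCl u))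
    (hk : 2*uAz s s' - uCz s s' ≤ 5) : False := by
  set β : ℝ := ((2*uAz s s' - uCz s s' : ℤ) : ℝ) with hβ
  set γ : ℝ := ((uCz s s' : ℤ) : ℝ) with hγ
  have hbg : β + γ = 2 * min (lA s) (lA s') := by
    rw [hβ, hγ]; push_cast [uA_cast, uC_cast]; ring
  have hx1 : wit (β + 1000100*(i:ℝ)) (γ + (-999900)*(i:ℝ)) ∈ triCl t := by
    refine intra_mem_up h1 h2 hb (le_of_eq hbg.symm) ?_ ?_
    · rw [hβ, ← uB_cast]; exact_mod_cast Zcu s s'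
    · rw [hγ, uC_cast]
  have hx2 : wit (β + 1000100*(i:ℝ)) (γ + (-999900)*(i:ℝ)) ∈ triCl u := by
    refine hubox β γ ?_ ?_ ?_
    · rw [hbg]
      have h1' := lA_nonneg s
      have h2' := lA_nonneg s'
      have := min_le_left (lA s) (lA s')
      rcases le_total (lA s) (lA s') with h | h
      · rw [min_eq_left h]; linarith
      · rw [min_eq_right h]; linarith
    · rw [hβ]; exact_mod_cast hk
    · rw [hγ, uC_cast]; exact max_le (lC_le s) (lC_le s')
  exact disj_absurd hd hx1 hx2

lemma kill_dn {i : ℕ} {s s' : Fin 5} {t d : Pt × Pt × Bool}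
    (h1 : t.1 = Q i s) (h2 : t.2.1 = Q i s') (hb : t.2.2 = false)
    (hdbox : ∀ β γ : ℝ, β + γ ≤ 200 → 13 ≤ β → -7 ≤ γ →
        wit (β + 1000100*(i:ℝ)) (γ + (-999900)*(i:ℝ)) ∈ triCl d)
    (hd : Disjoint (triCl t) (triCl d))
    (hk : 13 ≤ 2*dAz s s' - dCz s s') : False := by
  set β : ℝ := ((2*dAz s s' - dCz s s' : ℤ) : ℝ) with hβ
  set γ : ℝ := ((dCz s s' : ℤ) : ℝ) with hγ
  have hbg : β + γ = 2 * max (lA s) (lA s') := by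
    rw [hβ, hγ]; push_cast [dA_cast, dC_cast]; ring
  have hx1 : wit (β + 1000100*(i:ℝ)) (γ + (-999900)*(i:ℝ)) ∈ triCl t := by
    refine intra_mem_dn h1 h2 hb (le_of_eq hbg) ?_ ?_
    · rw [hβ, ← dB_cast]; exact_mod_cast Zcd s s'
    · rw [hγ, dC_cast]
  have hx2 : wit (β + 1000100*(i:ℝ)) (γ + (-999900)*(i:ℝ)) ∈ triCl d := by
    refine hdbox β γ ?_ ?_ ?_
    · rw [hbg]
      have h1' := lA_le s
      have h2' := lA_le s'
      rcases le_total (lA s) (lA s') with h | h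
      · rw [max_eq_right h]; linarith
      · rw [max_eq_left h]; linarith
    · rw [hβ]; exact_mod_cast hk
    · rw [hγ, dC_cast]
      rcases le_total (lC s) (lC s') with h | h
      · rw [min_eq_left h]; exact lC_ge s
      · rw [min_eq_right h]; exact lC_ge s'
  exact disj_absurd hd hx1 hx2


def wB1 (a b c d : Fin 5) : ℤ := max (dBz c d) (2*uAz a b - uCz a b)
def wC1 (a b c d : Fin 5) : ℤ := min (uCz a b) (2*dAz c d - wB1 a b c d)
def wB2 (a b c d : Fin 5) : ℤ := max (dBz a b) (dBz c d)
def wC2 (a b c d : Fin 5) : ℤ := max (dCz a b) (dCz c d)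
def wB3 (a b c d : Fin 5) : ℤ := min (uBz a b) (uBz c d)
def wC3 (a b c d : Fin 5) : ℤ := min (uCz a b) (uCz c d)

lemma Ziud : ∀ a b : Fin 5, a ≠ b → a ≠ 1 → a ≠ 2 → b ≠ 1 → b ≠ 2 →
    2*uAz a b - uCz a b ≤ 5 ∧ 13 ≤ 2*dAz a b - dCz a b := by decide

lemma Ziiu_uu : ∀ a b c d : Fin 5, (a ≠ b ∧ c ≠ d ∧ a ≠ c ∧ a ≠ d ∧ b ≠ c ∧ b ≠ d ∧
    a ≠ 1 ∧ b ≠ 1 ∧ c ≠ 1 ∧ d ≠ 1) →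
    2*uAz a b - uCz a b ≤ 5 ∨ 2*uAz c d - uCz c d ≤ 5 := by decide

lemma Ziiu_ud : ∀ a b c d : Fin 5, (a ≠ b ∧ c ≠ d ∧ a ≠ c ∧ a ≠ d ∧ b ≠ c ∧ b ≠ d ∧
    a ≠ 1 ∧ b ≠ 1 ∧ c ≠ 1 ∧ d ≠ 1 ∧ ¬(2*uAz a b - uCz a b ≤ 5)) →
    (2*uAz a b ≤ wB1 a b c d + wC1 a b c d ∧ wB1 a b c d ≤ uBz a b ∧
     wC1 a b c d ≤ uCz a b ∧ wB1 a b c d + wC1 a b c d ≤ 2*dAz c d ∧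
     dBz c d ≤ wB1 a b c d ∧ dCz c d ≤ wC1 a b c d) := by decide

lemma Ziiu_dd : ∀ a b c d : Fin 5, (a ≠ b ∧ c ≠ d ∧ a ≠ c ∧ a ≠ d ∧ b ≠ c ∧ b ≠ d ∧
    a ≠ 1 ∧ b ≠ 1 ∧ c ≠ 1 ∧ d ≠ 1) →
    (wB2 a b c d + wC2 a b c d ≤ 2*dAz a b ∧ dBz a b ≤ wB2 a b c d ∧
     dCz a b ≤ wC2 a b c d ∧ wB2 a b c d + wC2 a b c d ≤ 2*dAz c d ∧
     dBz c d ≤ wB2 a b c d ∧ dCz c d ≤ wC2 a b c d) := by decide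

lemma Ziid_dd : ∀ a b c d : Fin 5, (a ≠ b ∧ c ≠ d ∧ a ≠ c ∧ a ≠ d ∧ b ≠ c ∧ b ≠ d ∧
    a ≠ 2 ∧ b ≠ 2 ∧ c ≠ 2 ∧ d ≠ 2) →
    13 ≤ 2*dAz a b - dCz a b ∨ 13 ≤ 2*dAz c d - dCz c d := by decide

lemma Ziid_ud : ∀ a b c d : Fin 5, (a ≠ b ∧ c ≠ d ∧ a ≠ c ∧ a ≠ d ∧ b ≠ c ∧ b ≠ d ∧
    a ≠ 2 ∧ b ≠ 2 ∧ c ≠ 2 ∧ d ≠ 2 ∧ ¬(13 ≤ 2*dAz c d - dCz c d)) →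
    (2*uAz a b ≤ wB1 a b c d + wC1 a b c d ∧ wB1 a b c d ≤ uBz a b ∧
     wC1 a b c d ≤ uCz a b ∧ wB1 a b c d + wC1 a b c d ≤ 2*dAz c d ∧
     dBz c d ≤ wB1 a b c d ∧ dCz c d ≤ wC1 a b c d) := by decide

lemma Ziid_uu : ∀ a b c d : Fin 5, (a ≠ b ∧ c ≠ d ∧ a ≠ c ∧ a ≠ d ∧ b ≠ c ∧ b ≠ d ∧
    a ≠ 2 ∧ b ≠ 2 ∧ c ≠ 2 ∧ d ≠ 2) →
    (2*uAz a b ≤ wB3 a b c d + wC3 a b c d ∧ wB3 a b c d ≤ uBz a b ∧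
     wC3 a b c d ≤ uCz a b ∧ 2*uAz c d ≤ wB3 a b c d + wC3 a b c d ∧
     wB3 a b c d ≤ uBz c d ∧ wC3 a b c d ≤ uCz c d) := by decide


lemma conf_ud {i : ℕ} {s1 s2 s3 s4 : Fin 5} {t t' : Pt × Pt × Bool}
    (e1 : t.1 = Q i s1) (e2 : t.2.1 = Q i s2) (hb : t.2.2 = true)
    (e3 : t'.1 = Q i s3) (e4 : t'.2.1 = Q i s4) (hb' : t'.2.2 = false)
    (hd : Disjoint (triCl t) (triCl t'))
    (hp : 2*uAz s1 s2 ≤ wB1 s1 s2 s3 s4 + wC1 s1 s2 s3 s4 ∧ wB1 s1 s2 s3 s4 ≤ uBz s1 s2 ∧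
     wC1 s1 s2 s3 s4 ≤ uCz s1 s2 ∧ wB1 s1 s2 s3 s4 + wC1 s1 s2 s3 s4 ≤ 2*dAz s3 s4 ∧
     dBz s3 s4 ≤ wB1 s1 s2 s3 s4 ∧ dCz s3 s4 ≤ wC1 s1 s2 s3 s4) : False := by
  obtain ⟨c1, c2, c3, c4, c5, c6⟩ := hp
  set β : ℝ := ((wB1 s1 s2 s3 s4 : ℤ) : ℝ) with hβ
  set γ : ℝ := ((wC1 s1 s2 s3 s4 : ℤ) : ℝ) with hγ
  refine disj_absurd hd (x := wit (β + 1000100*(i:ℝ)) (γ + (-999900)*(i:ℝ)))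
    (intra_mem_up e1 e2 hb ?_ ?_ ?_) (intra_mem_dn e3 e4 hb' ?_ ?_ ?_)
  · rw [hβ, hγ, ← uA_cast]; exact_mod_cast c1
  · rw [hβ, ← uB_cast]; exact_mod_cast c2
  · rw [hγ, ← uC_cast]; exact_mod_cast c3
  · rw [hβ, hγ, ← dA_cast]; exact_mod_cast c4
  · rw [hβ, ← dB_cast]; exact_mod_cast c5
  · rw [hγ, ← dC_cast]; exact_mod_cast c6

lemma conf_dd {i : ℕ} {s1 s2 s3 s4 : Fin 5} {t t' : Pt × Pt × Bool}
    (e1 : t.1 = Q i s1) (e2 : t.2.1 = Q i s2) (hb : t.2.2 = false)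
    (e3 : t'.1 = Q i s3) (e4 : t'.2.1 = Q i s4) (hb' : t'.2.2 = false)
    (hd : Disjoint (triCl t) (triCl t'))
    (hp : wB2 s1 s2 s3 s4 + wC2 s1 s2 s3 s4 ≤ 2*dAz s1 s2 ∧ dBz s1 s2 ≤ wB2 s1 s2 s3 s4 ∧
     dCz s1 s2 ≤ wC2 s1 s2 s3 s4 ∧ wB2 s1 s2 s3 s4 + wC2 s1 s2 s3 s4 ≤ 2*dAz s3 s4 ∧
     dBz s3 s4 ≤ wB2 s1 s2 s3 s4 ∧ dCz s3 s4 ≤ wC2 s1 s2 s3 s4) : False := by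
  obtain ⟨c1, c2, c3, c4, c5, c6⟩ := hp
  set β : ℝ := ((wB2 s1 s2 s3 s4 : ℤ) : ℝ) with hβ
  set γ : ℝ := ((wC2 s1 s2 s3 s4 : ℤ) : ℝ) with hγ
  refine disj_absurd hd (x := wit (β + 1000100*(i:ℝ)) (γ + (-999900)*(i:ℝ)))
    (intra_mem_dn e1 e2 hb ?_ ?_ ?_) (intra_mem_dn e3 e4 hb' ?_ ?_ ?_)
  · rw [hβ, hγ, ← dA_cast]; exact_mod_cast c1
  · rw [hβ, ← dB_cast]; exact_mod_cast c2
  · rw [hγ, ← dC_cast]; exact_mod_cast c3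
  · rw [hβ, hγ, ← dA_cast]; exact_mod_cast c4
  · rw [hβ, ← dB_cast]; exact_mod_cast c5
  · rw [hγ, ← dC_cast]; exact_mod_cast c6

lemma conf_uu {i : ℕ} {s1 s2 s3 s4 : Fin 5} {t t' : Pt × Pt × Bool}
    (e1 : t.1 = Q i s1) (e2 : t.2.1 = Q i s2) (hb : t.2.2 = true)
    (e3 : t'.1 = Q i s3) (e4 : t'.2.1 = Q i s4) (hb' : t'.2.2 = true)
    (hd : Disjoint (triCl t) (triCl t'))
    (hp : 2*uAz s1 s2 ≤ wB3 s1 s2 s3 s4 + wC3 s1 s2 s3 s4 ∧ wB3 s1 s2 s3 s4 ≤ uBz s1 s2 ∧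
     wC3 s1 s2 s3 s4 ≤ uCz s1 s2 ∧ 2*uAz s3 s4 ≤ wB3 s1 s2 s3 s4 + wC3 s1 s2 s3 s4 ∧
     wB3 s1 s2 s3 s4 ≤ uBz s3 s4 ∧ wC3 s1 s2 s3 s4 ≤ uCz s3 s4) : False := by
  obtain ⟨c1, c2, c3, c4, c5, c6⟩ := hp
  set β : ℝ := ((wB3 s1 s2 s3 s4 : ℤ) : ℝ) with hβ
  set γ : ℝ := ((wC3 s1 s2 s3 s4 : ℤ) : ℝ) with hγ
  refine disj_absurd hd (x := wit (β + 1000100*(i:ℝ)) (γ + (-999900)*(i:ℝ)))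
    (intra_mem_up e1 e2 hb ?_ ?_ ?_) (intra_mem_up e3 e4 hb' ?_ ?_ ?_)
  · rw [hβ, hγ, ← uA_cast]; exact_mod_cast c1
  · rw [hβ, ← uB_cast]; exact_mod_cast c2
  · rw [hγ, ← uC_cast]; exact_mod_cast c3
  · rw [hβ, hγ, ← uA_cast]; exact_mod_cast c4
  · rw [hβ, ← uB_cast]; exact_mod_cast c5
  · rw [hγ, ← uC_cast]; exact_mod_cast c6

lemma L_IUD {i : ℕ} {t u d : Pt × Pt × Bool} {s s' : Fin 5}
    (e1 : t.1 = Q i s) (e2 : t.2.1 = Q i s') (hss : s ≠ s')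
    (hu1 : Q i 1 ∈ triCl u)
    (hubox : ∀ β γ : ℝ, 0 ≤ β + γ → β ≤ 5 → γ ≤ 7 →
        wit (β + 1000100*(i:ℝ)) (γ + (-999900)*(i:ℝ)) ∈ triCl u)
    (hd1 : Q i 2 ∈ triCl d)
    (hdbox : ∀ β γ : ℝ, β + γ ≤ 200 → 13 ≤ β → -7 ≤ γ →
        wit (β + 1000100*(i:ℝ)) (γ + (-999900)*(i:ℝ)) ∈ triCl d)
    (dtu : Disjoint (triCl t) (triCl u)) (dtd : Disjoint (triCl t) (triCl d)) : False := by
  have n1 : s ≠ 1 := by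
    rintro rfl
    have h := mem_triCl_fst t; rw [e1] at h
    exact disj_absurd dtu h hu1
  have n2 : s ≠ 2 := by
    rintro rfl
    have h := mem_triCl_fst t; rw [e1] at h
    exact disj_absurd dtd h hd1
  have n3 : s' ≠ 1 := by
    rintro rfl
    have h := mem_triCl_snd t; rw [e2] at h
    exact disj_absurd dtu h hu1
  have n4 : s' ≠ 2 := by
    rintro rfl
    have h := mem_triCl_snd t; rw [e2] at h
    exact disj_absurd dtd h hd1
  obtain ⟨hk1, hk2⟩ := Ziud s s' hss n1 n2 n3 n4
  cases hb : t.2.2 with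
  | true => exact kill_up e1 e2 hb hubox dtu hk1
  | false => exact kill_dn e1 e2 hb hdbox dtd hk2

lemma L_IIU {i : ℕ} {t t' u : Pt × Pt × Bool} {s1 s2 s3 s4 : Fin 5}
    (e1 : t.1 = Q i s1) (e2 : t.2.1 = Q i s2) (h12 : s1 ≠ s2)
    (e3 : t'.1 = Q i s3) (e4 : t'.2.1 = Q i s4) (h34 : s3 ≠ s4)
    (hu1 : Q i 1 ∈ triCl u)
    (hubox : ∀ β γ : ℝ, 0 ≤ β + γ → β ≤ 5 → γ ≤ 7 →
        wit (β + 1000100*(i:ℝ)) (γ + (-999900)*(i:ℝ)) ∈ triCl u)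
    (dtu : Disjoint (triCl t) (triCl u)) (dt'u : Disjoint (triCl t') (triCl u))
    (dtt' : Disjoint (triCl t) (triCl t')) : False := by
  have m1 := mem_triCl_fst t; rw [e1] at m1
  have m2 := mem_triCl_snd t; rw [e2] at m2
  have m3 := mem_triCl_fst t'; rw [e3] at m3
  have m4 := mem_triCl_snd t'; rw [e4] at m4
  have n1 : s1 ≠ 1 := by rintro rfl; exact disj_absurd dtu m1 hu1
  have n2 : s2 ≠ 1 := by rintro rfl; exact disj_absurd dtu m2 hu1
  have n3 : s3 ≠ 1 := by rintro rfl; exact disj_absurd dt'u m3 hu1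
  have n4 : s4 ≠ 1 := by rintro rfl; exact disj_absurd dt'u m4 hu1
  have d13 : s1 ≠ s3 := by rintro rfl; exact disj_absurd dtt' m1 m3
  have d14 : s1 ≠ s4 := by rintro rfl; exact disj_absurd dtt' m1 m4
  have d23 : s2 ≠ s3 := by rintro rfl; exact disj_absurd dtt' m2 m3
  have d24 : s2 ≠ s4 := by rintro rfl; exact disj_absurd dtt' m2 m4
  cases hb : t.2.2 with
  | true =>
    by_cases hk : 2*uAz s1 s2 - uCz s1 s2 ≤ 5
    · exact kill_up e1 e2 hb hubox dtu hk
    · cases hb' : t'.2.2 with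
      | true =>
        rcases Ziiu_uu s1 s2 s3 s4 ⟨h12, h34, d13, d14, d23, d24, n1, n2, n3, n4⟩ with h | h
        · exact kill_up e1 e2 hb hubox dtu h
        · exact kill_up e3 e4 hb' hubox dt'u h
      | false =>
        exact conf_ud e1 e2 hb e3 e4 hb' dtt'
          (Ziiu_ud s1 s2 s3 s4 ⟨h12, h34, d13, d14, d23, d24, n1, n2, n3, n4, hk⟩)
  | false =>
    cases hb' : t'.2.2 with
    | true =>
      by_cases hk : 2*uAz s3 s4 - uCz s3 s4 ≤ 5
      · exact kill_up e3 e4 hb' hubox dt'u hk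
      · exact conf_ud e3 e4 hb' e1 e2 hb dtt'.symm
          (Ziiu_ud s3 s4 s1 s2 ⟨h34, h12, d13.symm, d23.symm, d14.symm, d24.symm, n3, n4, n1, n2, hk⟩)
    | false =>
      exact conf_dd e1 e2 hb e3 e4 hb' dtt'
        (Ziiu_dd s1 s2 s3 s4 ⟨h12, h34, d13, d14, d23, d24, n1, n2, n3, n4⟩)

lemma L_IID {i : ℕ} {t t' d : Pt × Pt × Bool} {s1 s2 s3 s4 : Fin 5}
    (e1 : t.1 = Q i s1) (e2 : t.2.1 = Q i s2) (h12 : s1 ≠ s2)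
    (e3 : t'.1 = Q i s3) (e4 : t'.2.1 = Q i s4) (h34 : s3 ≠ s4)
    (hd1 : Q i 2 ∈ triCl d)
    (hdbox : ∀ β γ : ℝ, β + γ ≤ 200 → 13 ≤ β → -7 ≤ γ →
        wit (β + 1000100*(i:ℝ)) (γ + (-999900)*(i:ℝ)) ∈ triCl d)
    (dtd : Disjoint (triCl t) (triCl d)) (dt'd : Disjoint (triCl t') (triCl d))
    (dtt' : Disjoint (triCl t) (triCl t')) : False := by
  have m1 := mem_triCl_fst t; rw [e1] at m1
  have m2 := mem_triCl_snd t; rw [e2] at m2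
  have m3 := mem_triCl_fst t'; rw [e3] at m3
  have m4 := mem_triCl_snd t'; rw [e4] at m4
  have n1 : s1 ≠ 2 := by rintro rfl; exact disj_absurd dtd m1 hd1
  have n2 : s2 ≠ 2 := by rintro rfl; exact disj_absurd dtd m2 hd1
  have n3 : s3 ≠ 2 := by rintro rfl; exact disj_absurd dt'd m3 hd1
  have n4 : s4 ≠ 2 := by rintro rfl; exact disj_absurd dt'd m4 hd1
  have d13 : s1 ≠ s3 := by rintro rfl; exact disj_absurd dtt' m1 m3
  have d14 : s1 ≠ s4 := by rintro rfl; exact disj_absurd dtt' m1 m4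
  have d23 : s2 ≠ s3 := by rintro rfl; exact disj_absurd dtt' m2 m3
  have d24 : s2 ≠ s4 := by rintro rfl; exact disj_absurd dtt' m2 m4
  cases hb : t.2.2 with
  | false =>
    by_cases hk : 13 ≤ 2*dAz s1 s2 - dCz s1 s2
    · exact kill_dn e1 e2 hb hdbox dtd hk
    · cases hb' : t'.2.2 with
      | false =>
        rcases Ziid_dd s1 s2 s3 s4 ⟨h12, h34, d13, d14, d23, d24, n1, n2, n3, n4⟩ with h | h
        · exact kill_dn e1 e2 hb hdbox dtd h
        · exact kill_dn e3 e4 hb' hdbox dt'd h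
      | true =>
        exact conf_ud e3 e4 hb' e1 e2 hb dtt'.symm
          (Ziid_ud s3 s4 s1 s2 ⟨h34, h12, d13.symm, d23.symm, d14.symm, d24.symm, n3, n4, n1, n2, hk⟩)
  | true =>
    cases hb' : t'.2.2 with
    | false =>
      by_cases hk : 13 ≤ 2*dAz s3 s4 - dCz s3 s4
      · exact kill_dn e3 e4 hb' hdbox dt'd hk
      · exact conf_ud e1 e2 hb e3 e4 hb' dtt'
          (Ziid_ud s1 s2 s3 s4 ⟨h12, h34, d13, d14, d23, d24, n1, n2, n3, n4, hk⟩)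
    | true =>
      exact conf_uu e1 e2 hb e3 e4 hb' dtt'
        (Ziid_uu s1 s2 s3 s4 ⟨h12, h34, d13, d14, d23, d24, n1, n2, n3, n4⟩)

lemma fin5_pigeonhole : ∀ x1 x2 x3 x4 x5 x6 : Fin 5,
    (x1 ≠ x2 ∧ x1 ≠ x3 ∧ x1 ≠ x4 ∧ x1 ≠ x5 ∧ x1 ≠ x6 ∧ x2 ≠ x3 ∧ x2 ≠ x4 ∧ x2 ≠ x5 ∧
     x2 ≠ x6 ∧ x3 ≠ x4 ∧ x3 ≠ x5 ∧ x3 ≠ x6 ∧ x4 ≠ x5 ∧ x4 ≠ x6 ∧ x5 ≠ x6) → False := by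
  intro x1 x2 x3 x4 x5 x6 h
  obtain ⟨h12, h13, h14, h15, h16, h23, h24, h25, h26, h34, h35, h36, h45, h46, h56⟩ := h
  have hle : ({x1, x2, x3, x4, x5, x6} : Finset (Fin 5)).card ≤ 5 :=
    le_trans (Finset.card_le_univ _) (by simp)
  have e : ({x1, x2, x3, x4, x5, x6} : Finset (Fin 5)).card = 6 := by
    rw [Finset.card_insert_of_notMem (by simp [h12, h13, h14, h15, h16]),
        Finset.card_insert_of_notMem (by simp [h23, h24, h25, h26]),
        Finset.card_insert_of_notMem (by simp [h34, h35, h36]),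
        Finset.card_insert_of_notMem (by simp [h45, h46]),
        Finset.card_insert_of_notMem (by simp [h56]),
        Finset.card_singleton]
  omega

lemma L_III {i : ℕ} {t t' t'' : Pt × Pt × Bool} {s1 s2 s3 s4 s5 s6 : Fin 5}
    (e1 : t.1 = Q i s1) (e2 : t.2.1 = Q i s2) (h12 : s1 ≠ s2)
    (e3 : t'.1 = Q i s3) (e4 : t'.2.1 = Q i s4) (h34 : s3 ≠ s4)
    (e5 : t''.1 = Q i s5) (e6 : t''.2.1 = Q i s6) (h56 : s5 ≠ s6)
    (d1 : Disjoint (triCl t) (triCl t')) (d2 : Disjoint (triCl t) (triCl t''))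
    (d3 : Disjoint (triCl t') (triCl t'')) : False := by
  have m1 := mem_triCl_fst t; rw [e1] at m1
  have m2 := mem_triCl_snd t; rw [e2] at m2
  have m3 := mem_triCl_fst t'; rw [e3] at m3
  have m4 := mem_triCl_snd t'; rw [e4] at m4
  have m5 := mem_triCl_fst t''; rw [e5] at m5
  have m6 := mem_triCl_snd t''; rw [e6] at m6
  refine fin5_pigeonhole s1 s2 s3 s4 s5 s6 ⟨h12, ?_, ?_, ?_, ?_, ?_, ?_, ?_, ?_, h34, ?_, ?_, ?_, ?_, h56⟩
  all_goals rintro rfl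
  · exact disj_absurd d1 m1 m3
  · exact disj_absurd d1 m1 m4
  · exact disj_absurd d2 m1 m5
  · exact disj_absurd d2 m1 m6
  · exact disj_absurd d1 m2 m3
  · exact disj_absurd d1 m2 m4
  · exact disj_absurd d2 m2 m5
  · exact disj_absurd d2 m2 m6
  · exact disj_absurd d3 m3 m5
  · exact disj_absurd d3 m3 m6
  · exact disj_absurd d3 m4 m5
  · exact disj_absurd d3 m4 m6


lemma fiber_le_two {k i : ℕ} {T : Finset (Pt × Pt × Bool)}
    (hT1 : ∀ t ∈ T, IsEmptyTriOf (Pk k) t)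
    (hT2 : (T : Set (Pt × Pt × Bool)).Pairwise fun t t' => Disjoint (triCl t) (triCl t')) :
    (T.filter fun t => assign t = i).card ≤ 2 := by
  by_contra hcon
  push_neg at hcon
  obtain ⟨t1, t2, t3, ht1, ht2, ht3, h12, h13, h23⟩ := Finset.two_lt_card_iff.mp hcon
  rw [Finset.mem_filter] at ht1 ht2 ht3
  obtain ⟨ht1T, ha1⟩ := ht1
  obtain ⟨ht2T, ha2⟩ := ht2
  obtain ⟨ht3T, ha3⟩ := ht3
  have d12 : Disjoint (triCl t1) (triCl t2) := hT2 ht1T ht2T h12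
  have d13 : Disjoint (triCl t1) (triCl t3) := hT2 ht1T ht3T h13
  have d23 : Disjoint (triCl t2) (triCl t3) := hT2 ht2T ht3T h23
  have c1 := classify (hT1 t1 ht1T) ha1
  have c2 := classify (hT1 t2 ht2T) ha2
  have c3 := classify (hT1 t3 ht3T) ha3
  rcases c1 with i1 | u1 | dd1 <;> rcases c2 with i2 | u2 | dd2 <;> rcases c3 with i3 | u3 | dd3
  · -- III
    obtain ⟨s1, s2, g12, e1, e2⟩ := i1
    obtain ⟨s3, s4, g34, e3, e4⟩ := i2
    obtain ⟨s5, s6, g56, e5, e6⟩ := i3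
    exact L_III e1 e2 g12 e3 e4 g34 e5 e6 g56 d12 d13 d23
  · -- I I U
    obtain ⟨s1, s2, g12, e1, e2⟩ := i1
    obtain ⟨s3, s4, g34, e3, e4⟩ := i2
    exact L_IIU e1 e2 g12 e3 e4 g34 u3.1 u3.2 d13 d23 d12
  · -- I I D
    obtain ⟨s1, s2, g12, e1, e2⟩ := i1
    obtain ⟨s3, s4, g34, e3, e4⟩ := i2
    exact L_IID e1 e2 g12 e3 e4 g34 dd3.1 dd3.2 d13 d23 d12
  · -- I U I
    obtain ⟨s1, s2, g12, e1, e2⟩ := i1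
    obtain ⟨s3, s4, g34, e3, e4⟩ := i3
    exact L_IIU e1 e2 g12 e3 e4 g34 u2.1 u2.2 d12 d23.symm d13
  · -- I U U
    exact disj_absurd d23 u2.1 u3.1
  · -- I U D
    obtain ⟨s1, s2, g12, e1, e2⟩ := i1
    exact L_IUD e1 e2 g12 u2.1 u2.2 dd3.1 dd3.2 d12 d13
  · -- I D I
    obtain ⟨s1, s2, g12, e1, e2⟩ := i1
    obtain ⟨s3, s4, g34, e3, e4⟩ := i3
    exact L_IID e1 e2 g12 e3 e4 g34 dd2.1 dd2.2 d12 d23.symm d13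
  · -- I D U
    obtain ⟨s1, s2, g12, e1, e2⟩ := i1
    exact L_IUD e1 e2 g12 u3.1 u3.2 dd2.1 dd2.2 d13 d12
  · -- I D D
    exact disj_absurd d23 dd2.1 dd3.1
  · -- U I I
    obtain ⟨s1, s2, g12, e1, e2⟩ := i2
    obtain ⟨s3, s4, g34, e3, e4⟩ := i3
    exact L_IIU e1 e2 g12 e3 e4 g34 u1.1 u1.2 d12.symm d13.symm d23
  · -- U I U
    exact disj_absurd d13 u1.1 u3.1
  · -- U I D
    obtain ⟨s1, s2, g12, e1, e2⟩ := i2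
    exact L_IUD e1 e2 g12 u1.1 u1.2 dd3.1 dd3.2 d12.symm d23
  · -- U U I
    exact disj_absurd d12 u1.1 u2.1
  · -- U U U
    exact disj_absurd d12 u1.1 u2.1
  · -- U U D
    exact disj_absurd d12 u1.1 u2.1
  · -- U D I
    obtain ⟨s1, s2, g12, e1, e2⟩ := i3
    exact L_IUD e1 e2 g12 u1.1 u1.2 dd2.1 dd2.2 d13.symm d23.symm
  · -- U D U
    exact disj_absurd d13 u1.1 u3.1
  · -- U D D
    exact disj_absurd d23 dd2.1 dd3.1
  · -- D I I
    obtain ⟨s1, s2, g12, e1, e2⟩ := i2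
    obtain ⟨s3, s4, g34, e3, e4⟩ := i3
    exact L_IID e1 e2 g12 e3 e4 g34 dd1.1 dd1.2 d12.symm d13.symm d23
  · -- D I U
    obtain ⟨s1, s2, g12, e1, e2⟩ := i2
    exact L_IUD e1 e2 g12 u3.1 u3.2 dd1.1 dd1.2 d23 d12.symm
  · -- D I D
    exact disj_absurd d13 dd1.1 dd3.1
  · -- D U I
    obtain ⟨s1, s2, g12, e1, e2⟩ := i3
    exact L_IUD e1 e2 g12 u2.1 u2.2 dd1.1 dd1.2 d23.symm d13.symm
  · -- D U U
    exact disj_absurd d23 u2.1 u3.1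
  · -- D U D
    exact disj_absurd d13 dd1.1 dd3.1
  · -- D D I
    exact disj_absurd d12 dd1.1 dd2.1
  · -- D D U
    exact disj_absurd d12 dd1.1 dd2.1
  · -- D D D
    exact disj_absurd d12 dd1.1 dd2.1

lemma T_card_le {k : ℕ} {T : Finset (Pt × Pt × Bool)}
    (hT1 : ∀ t ∈ T, IsEmptyTriOf (Pk k) t)
    (hT2 : (T : Set (Pt × Pt × Bool)).Pairwise fun t t' => Disjoint (triCl t) (triCl t')) :
    T.card ≤ 2 * k := by
  have hmap : ∀ t ∈ T, assign t ∈ Finset.range k := by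
    intro t ht
    obtain ⟨h1, h2, _, _⟩ := hT1 t ht
    obtain ⟨i₁, hi₁, s₁, he₁⟩ := mem_Pk.mp h1
    obtain ⟨i₂, hi₂, s₂, he₂⟩ := mem_Pk.mp h2
    have hc1 : clu t.1 = i₁ := by rw [he₁]; exact clu_Q _ _
    have hc2 : clu t.2.1 = i₂ := by rw [he₂]; exact clu_Q _ _
    unfold assign
    rw [hc1, hc2, Finset.mem_range]
    by_cases hb : t.2.2 <;> simp [hb] <;> omega
  calc T.card = ∑ i ∈ Finset.range k, (T.filter fun t => assign t = i).card :=
        Finset.card_eq_sum_card_fiberwise hmap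
    _ ≤ ∑ _i ∈ Finset.range k, 2 :=
        Finset.sum_le_sum fun i _ => fiber_le_two hT1 hT2
    _ = 2 * k := by simp [mul_comm]


end SMUB

/-- There are infinitely many `n` for which some set `P` of `n` points in general
position has strong matchings of size at most `2n/5` only: every family of pairwise
disjoint (closed) empty triangles, each introducing an edge of `G⋆(P)`, has at most
`2n/5` members. -/
theorem strong_matching_upper_bound :
    ∀ N : ℕ, ∃ n, N ≤ n ∧ ∃ P : Finset Pt, P.card = n ∧ GenPos P ∧
      ∀ T : Finset (Pt × Pt × Bool),
        (∀ t ∈ T, IsEmptyTriOf P t) →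
        ((T : Set (Pt × Pt × Bool)).Pairwise fun t t' => Disjoint (triCl t) (triCl t')) →
        (T.card : ℝ) ≤ 2 * (n : ℝ) / 5 := by
  intro N
  refine ⟨5 * N, by omega, SMUB.Pk N, SMUB.card_Pk N, SMUB.genpos_Pk N, ?_⟩
  intro T hT1 hT2
  have hb := SMUB.T_card_le hT1 hT2
  have hb' : (T.card : ℝ) ≤ 2 * (N : ℝ) := by exact_mod_cast hb
  have : ((5 * N : ℕ) : ℝ) = 5 * (N : ℝ) := by push_cast; ring
  rw [this]
  linarith
end
end
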